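/- arXiv:math/9802048 — 3 statements merged into one kernel-verified Lean document; each statement's English description precedes it below -/
import Mathlib

section
/- Let w ∈ W̄_{D^−} and suppose w·φ = a·φ with a ∈ C*. Then a = (−1)^{l(w)}, where l(w) is the length of w in S_n. -/
noncomputable section

/-!
Setting of Propositions on isotropy subgroups: `D` is a skew Young diagram of type
`D_L^m` (m rows of L squares each, occupying rows 1,…,m), numbered column by column
(left to right, top to bottom within columns) with the labels `1,…,n = Lm`
(here `Fin (L·m)`), encoded by the position map `pos : Fin (L·m) → ℤ × ℤ`
(`pos i = (row, column)`).  `D⁺` is the union of the columns of height `> 1` and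
`D⁻` its complement; `W̄_{D⁺}` (resp. `W̄_{D⁻}`) is the subgroup of `S_n`
preserving the label set of every column of `D⁺` and fixing the labels of `D⁻`
(resp. preserving the label sets of rows of `D⁻` and fixing the labels of `D⁺`).
`φ` is a nonzero vector of `S[t']`-weight `ζ_r = Lc* − Σ_i (c_i + m)ε_i` (`c_i` the
content of square `i`) in a module over the degenerate double affine Hecke algebra
`H_n`, on which the relation
`w⁻¹·ξ·w = w⁻¹(ξ) + Σ_{α ∈ S(w)} w(α)(ξ)·s_α` holds; this is the situation of the
vector `φ = [π_{κ,ν}(φ_{x_r})·v_0] ∈ 𝔙/U'(b^0)𝔙` (κ = L, ν(a) = a) attached to the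
regular sequence `r` of `D`.
-/

namespace SkewIso

/-- `S ⊆ ℤ²` is a skew Young diagram of type `D_L^m`: `m` rows, each of `L`
squares, in the rows `1,…,m`, forming a skew Young diagram. -/
def TypeDLm (L m : ℕ) (S : Set (ℤ × ℤ)) : Prop :=
  ∃ mu : ℤ → ℤ, (∀ t : ℤ, 1 ≤ t → t < m → mu (t + 1) ≤ mu t) ∧
    S = {p : ℤ × ℤ | 1 ≤ p.1 ∧ p.1 ≤ m ∧ mu p.1 < p.2 ∧ p.2 ≤ mu p.1 + L}

variable (L m : ℕ) (pos : Fin (L * m) → ℤ × ℤ)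

/-- The content `c_i` of the square numbered `i` (column minus row). -/
def content (i : Fin (L * m)) : ℤ := (pos i).2 - (pos i).1

/-- The height of the column containing square `i`. -/
def colHeight (i : Fin (L * m)) : ℕ :=
  (Finset.univ.filter fun j => (pos j).2 = (pos i).2).card

/-- The subgroup `W̄_{D⁺}`: permutations of the labels preserving each column
(hence fixing the labels of columns of height 1, i.e. of `D⁻`). -/
def WDplus : Set (Equiv.Perm (Fin (L * m))) :=
  {w | ∀ i, (pos (w i)).2 = (pos i).2}

/-- The subgroup `W̄_{D⁻}`: permutations fixing the labels of `D⁺` and preserving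
the intersection of each row with `D⁻`. -/
def WDminus : Set (Equiv.Perm (Fin (L * m))) :=
  {w | ∀ i, (2 ≤ colHeight L m pos i → w i = i) ∧
    (colHeight L m pos i = 1 →
      colHeight L m pos (w i) = 1 ∧ (pos (w i)).1 = (pos i).1)}

/-- The inversion set relation (brel) of the degenerate double affine Hecke algebra,
restricted to the finite Weyl group `S_n`:
`w⁻¹·ε_j^∨·w = ε_{w⁻¹(j)}^∨ + Σ_{α_{kl} ∈ S(w)} (δ_{j,w(k)} − δ_{j,w(l)})·s_{kl}`. -/
def BrelHolds {M : Type*} [AddCommGroup M] [Module ℂ M]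
    (P : Equiv.Perm (Fin (L * m)) →* Module.End ℂ M)
    (X : Fin (L * m) → Module.End ℂ M) : Prop :=
  ∀ (w : Equiv.Perm (Fin (L * m))) (j : Fin (L * m)),
    P w⁻¹ * X j * P w
      = X (w⁻¹ j)
        + ∑ p ∈ Finset.univ.filter
            (fun p : Fin (L * m) × Fin (L * m) => p.1 < p.2 ∧ w p.2 < w p.1),
          (((if j = w p.1 then 1 else 0) - (if j = w p.2 then 1 else 0) : ℂ))
            • P (Equiv.swap p.1 p.2)

/-- The length of `w ∈ S_n` (the number of inversions). -/
def len (w : Equiv.Perm (Fin (L * m))) : ℕ :=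
  (Finset.univ.filter
    (fun p : Fin (L * m) × Fin (L * m) => p.1 < p.2 ∧ w p.2 < w p.1)).card


set_option linter.unusedSectionVars false
set_option maxHeartbeats 1000000

section GenEig

variable {M : Type*} [AddCommGroup M] [Module ℂ M]

lemma pow_kill_mono (g : Module.End ℂ M) {k k' : ℕ} (h : k ≤ k') {x : M}
    (hx : (g ^ k) x = 0) : (g ^ k') x = 0 := by
  obtain ⟨d, rfl⟩ := Nat.exists_eq_add_of_le h
  rw [add_comm, pow_add, Module.End.mul_apply, hx, map_zero]

/-- The generalized eigenspace of `f` for eigenvalue `c`. -/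
def sgen (f : Module.End ℂ M) (c : ℂ) : Submodule ℂ M where
  carrier := {x | ∃ k : ℕ, ((f - c • (1 : Module.End ℂ M)) ^ k) x = 0}
  add_mem' := by
    rintro x y ⟨k, hk⟩ ⟨k', hk'⟩
    exact ⟨max k k', by
      rw [map_add, pow_kill_mono _ (le_max_left k k') hk,
        pow_kill_mono _ (le_max_right k k') hk', add_zero]⟩
  zero_mem' := ⟨0, by simp⟩
  smul_mem' := by
    rintro a x ⟨k, hk⟩
    exact ⟨k, by rw [map_smul, hk, smul_zero]⟩

lemma mem_sgen {f : Module.End ℂ M} {c : ℂ} {x : M} :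
    x ∈ sgen f c ↔ ∃ k : ℕ, ((f - c • (1 : Module.End ℂ M)) ^ k) x = 0 := Iff.rfl

lemma weight_mem_sgen {f : Module.End ℂ M} {c : ℂ} {x : M} (hx : f x = c • x) :
    x ∈ sgen f c := by
  refine ⟨1, ?_⟩
  rw [pow_one, LinearMap.sub_apply, LinearMap.smul_apply, Module.End.one_apply, hx, sub_self]

lemma commute_sub_smul_one {f g : Module.End ℂ M} (h : Commute f g) (c d : ℂ) :
    Commute (f - c • (1 : Module.End ℂ M)) (g - d • (1 : Module.End ℂ M)) := by
  have h1 : Commute f (g - d • (1 : Module.End ℂ M)) :=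
    h.sub_right ((Commute.one_right f).smul_right d)
  exact h1.sub_left ((Commute.one_left _).smul_left c)

lemma sgen_stab {f g : Module.End ℂ M} (h : Commute g f) {c : ℂ} {x : M}
    (hx : x ∈ sgen f c) : g x ∈ sgen f c := by
  obtain ⟨k, hk⟩ := hx
  refine ⟨k, ?_⟩
  have hc : Commute g ((f - c • (1 : Module.End ℂ M)) ^ k) :=
    (h.sub_right ((Commute.one_right g).smul_right c)).pow_right k
  calc ((f - c • (1 : Module.End ℂ M)) ^ k) (g x)
      = (((f - c • (1 : Module.End ℂ M)) ^ k) * g) x := rfl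
    _ = (g * ((f - c • (1 : Module.End ℂ M)) ^ k)) x := by rw [hc.eq]
    _ = g (((f - c • (1 : Module.End ℂ M)) ^ k) x) := rfl
    _ = 0 := by rw [hk, map_zero]

lemma sgen_inj_step {f : Module.End ℂ M} {a b : ℂ} (hab : b ≠ a) {x : M}
    (hx : x ∈ sgen f a) (hxb : (f - b • (1 : Module.End ℂ M)) x = 0) : x = 0 := by
  obtain ⟨k, hk⟩ := hx
  induction k generalizing x with
  | zero => simpa using hk
  | succ k ih =>
    have hy : ((f - a • (1 : Module.End ℂ M)) ^ k) ((f - a • (1 : Module.End ℂ M)) x) = 0 := by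
      rw [← Module.End.mul_apply, ← pow_succ]; exact hk
    have hcomm : Commute (f - a • (1 : Module.End ℂ M)) (f - b • (1 : Module.End ℂ M)) :=
      commute_sub_smul_one (Commute.refl f) a b
    have hyb : (f - b • (1 : Module.End ℂ M)) ((f - a • (1 : Module.End ℂ M)) x) = 0 := by
      calc (f - b • (1 : Module.End ℂ M)) ((f - a • (1 : Module.End ℂ M)) x)
          = ((f - b • (1 : Module.End ℂ M)) * (f - a • (1 : Module.End ℂ M))) x := rfl
        _ = ((f - a • (1 : Module.End ℂ M)) * (f - b • (1 : Module.End ℂ M))) x := by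
            rw [hcomm.eq]
        _ = (f - a • (1 : Module.End ℂ M)) ((f - b • (1 : Module.End ℂ M)) x) := rfl
        _ = 0 := by rw [hxb, map_zero]
    have h0 : (f - a • (1 : Module.End ℂ M)) x = 0 := ih hyb hy
    have h2 : (f - a • (1 : Module.End ℂ M)) x - (f - b • (1 : Module.End ℂ M)) x
        = (b - a) • x := by
      simp only [LinearMap.sub_apply, LinearMap.smul_apply, Module.End.one_apply, sub_smul]
      abel
    rw [h0, hxb, sub_zero] at h2
    have hba : (b - a) ≠ 0 := sub_ne_zero.mpr hab
    exact (smul_eq_zero.mp h2.symm).resolve_left hba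


lemma sgen_inj_pow {f : Module.End ℂ M} {a b : ℂ} (hab : b ≠ a) {x : M}
    (hx : x ∈ sgen f a) {k : ℕ}
    (hxb : ((f - b • (1 : Module.End ℂ M)) ^ k) x = 0) : x = 0 := by
  induction k generalizing x with
  | zero => simpa using hxb
  | succ k ih =>
    have h1 : ((f - b • (1 : Module.End ℂ M)) ^ k) ((f - b • (1 : Module.End ℂ M)) x) = 0 := by
      rw [← Module.End.mul_apply, ← pow_succ]; exact hxb
    have h2 : (f - b • (1 : Module.End ℂ M)) x ∈ sgen f a :=
      sgen_stab ((Commute.refl f).sub_left ((Commute.one_left f).smul_left b)) hx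
    have h3 : (f - b • (1 : Module.End ℂ M)) x = 0 := ih h2 h1
    exact sgen_inj_step hab hx h3

variable {ι : Type*} [Fintype ι] (X : ι → Module.End ℂ M)

/-- simultaneous generalized eigenspace -/
def Egen (mu : ι → ℂ) : Submodule ℂ M := ⨅ i, sgen (X i) (mu i)

lemma mem_Egen {mu : ι → ℂ} {x : M} :
    x ∈ Egen X mu ↔ ∀ i, x ∈ sgen (X i) (mu i) := Submodule.mem_iInf _

lemma weight_mem_Egen {mu : ι → ℂ} {x : M} (h : ∀ i, X i x = mu i • x) :
    x ∈ Egen X mu := (mem_Egen X).mpr fun i => weight_mem_sgen (h i)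

lemma Egen_stab {mu : ι → ℂ} {x : M} (g : Module.End ℂ M)
    (hg : ∀ i, Commute g (X i)) (hx : x ∈ Egen X mu) : g x ∈ Egen X mu :=
  (mem_Egen X).mpr fun i => sgen_stab (hg i) ((mem_Egen X).mp hx i)

lemma Egen_stab' (hX : ∀ i j, Commute (X i) (X j)) {mu : ι → ℂ} {x : M} (i : ι) (c : ℂ)
    (hx : x ∈ Egen X mu) : (X i - c • (1 : Module.End ℂ M)) x ∈ Egen X mu :=
  Egen_stab X (X i - c • 1)
    (fun j => (hX i j).sub_left ((Commute.one_left (X j)).smul_left c)) hx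

lemma supEgen_stab {S : Finset (ι → ℂ)} {x : M} (g : Module.End ℂ M)
    (hg : ∀ i, Commute g (X i)) (hx : x ∈ S.sup (Egen X)) : g x ∈ S.sup (Egen X) := by
  classical
  induction S using Finset.induction generalizing x with
  | empty => simp only [Finset.sup_empty, Submodule.mem_bot] at hx ⊢; rw [hx, map_zero]
  | insert _ _ hni ih =>
    rw [Finset.sup_insert] at hx ⊢
    obtain ⟨y, hy, z, hz, rfl⟩ := Submodule.mem_sup.mp hx
    rw [map_add]
    exact Submodule.add_mem_sup (Egen_stab X g hg hy) (ih hz)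

/-- Separation: the generalized weight space of `lam` meets the (finite) sum of the
generalized weight spaces of weights different from `lam` trivially. -/
lemma Egen_sep (hX : ∀ i j, Commute (X i) (X j)) {S : Finset (ι → ℂ)} {lam : ι → ℂ} (hlam : lam ∉ S) {x : M}
    (hx : x ∈ Egen X lam) (hxS : x ∈ S.sup (Egen X)) : x = 0 := by
  classical
  induction S using Finset.induction generalizing x with
  | empty => simpa using hxS
  | @insert nu S' hni ih =>
    rw [Finset.sup_insert] at hxS
    obtain ⟨y, hy, z, hz, hxyz⟩ := Submodule.mem_sup.mp hxS
    have hnl : nu ≠ lam := fun h => hlam (h ▸ Finset.mem_insert_self nu S')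
    obtain ⟨i0, hi0⟩ := Function.ne_iff.mp hnl
    obtain ⟨k, hk⟩ := (mem_Egen X).mp hy i0
    set A : Module.End ℂ M := (X i0 - nu i0 • (1 : Module.End ℂ M)) ^ k with hA
    have hAcomm : ∀ j, Commute A (X j) := fun j =>
      (((hX i0 j).sub_left ((Commute.one_left (X j)).smul_left (nu i0)))).pow_left k
    have hAx : A x ∈ Egen X lam := Egen_stab X A hAcomm hx
    have hAxS : A x ∈ S'.sup (Egen X) := by
      have : A x = A z := by rw [← hxyz, map_add, hk, zero_add]
      rw [this]
      exact supEgen_stab X A hAcomm hz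
    have h0 : A x = 0 := ih (fun h => hlam (Finset.mem_insert_of_mem h)) hAx hAxS
    exact sgen_inj_pow hi0 ((mem_Egen X).mp hx i0) h0


lemma tele (g : Module.End ℂ M) {al be : ℂ} (hne : al ≠ be) (k : ℕ) {x : M}
    (hx : ((g - be • (1 : Module.End ℂ M)) ^ k) x = 0) :
    (g - al • (1 : Module.End ℂ M))
      (-(∑ t ∈ Finset.range k, ((al - be)⁻¹) ^ (t + 1) •
          ((g - be • (1 : Module.End ℂ M)) ^ t) x)) = x := by
  set D := g - be • (1 : Module.End ℂ M) with hD
  set e := al - be with he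
  have hee : e ≠ 0 := sub_ne_zero.mpr hne
  have hgal : g - al • (1 : Module.End ℂ M) = D - e • (1 : Module.End ℂ M) := by
    rw [hD, he, sub_smul]; abel
  rw [hgal]
  have happ : ∀ v : M, (D - e • (1 : Module.End ℂ M)) v = D v - e • v := by
    intro v; simp [LinearMap.sub_apply, LinearMap.smul_apply]
  rw [happ]
  have h1 : D (-(∑ t ∈ Finset.range k, (e⁻¹) ^ (t + 1) • (D ^ t) x))
      = -(∑ t ∈ Finset.range k, (e⁻¹) ^ (t + 1) • (D ^ (t + 1)) x) := by
    rw [map_neg, map_sum]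
    congr 1
    refine Finset.sum_congr rfl fun t _ => ?_
    rw [map_smul, ← Module.End.mul_apply, ← pow_succ']
  have h2 : e • (-(∑ t ∈ Finset.range k, (e⁻¹) ^ (t + 1) • (D ^ t) x))
      = -(∑ t ∈ Finset.range k, (e⁻¹) ^ t • (D ^ t) x) := by
    rw [smul_neg, Finset.smul_sum]
    congr 1
    refine Finset.sum_congr rfl fun t _ => ?_
    rw [smul_smul]
    congr 1
    rw [pow_succ]
    field_simp
  rw [h1, h2]
  have h3 : -(∑ t ∈ Finset.range k, (e⁻¹) ^ (t + 1) • (D ^ (t + 1)) x)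
        - -(∑ t ∈ Finset.range k, (e⁻¹) ^ t • (D ^ t) x)
      = ∑ t ∈ Finset.range k,
          ((e⁻¹) ^ t • (D ^ t) x - (e⁻¹) ^ (t + 1) • (D ^ (t + 1)) x) := by
    rw [Finset.sum_sub_distrib]
    abel
  rw [h3, Finset.sum_range_sub' (f := fun t => (e⁻¹) ^ t • (D ^ t) x)]
  simp [hx]

lemma Egen_lift (hX : ∀ i j, Commute (X i) (X j)) (T : Finset (ι → ℂ)) (c : ι → ℂ)
    (hc : c ∉ T) (y : M)
    (hy : ∀ i, (X i - c i • (1 : Module.End ℂ M)) y ∈ Egen X c ⊔ T.sup (Egen X)) :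
    y ∈ Egen X c ⊔ T.sup (Egen X) := by
  classical
  induction T using Finset.induction generalizing y with
  | empty =>
    refine Submodule.mem_sup_left ((mem_Egen X).mpr fun i => ?_)
    have hyi := hy i
    rw [Finset.sup_empty, sup_bot_eq] at hyi
    obtain ⟨k, hk⟩ := (mem_Egen X).mp hyi i
    exact ⟨k + 1, by rw [pow_succ, Module.End.mul_apply]; exact hk⟩
  | @insert nu T' hni ih =>
    have hcnu : c ≠ nu := fun h => hc (h ▸ Finset.mem_insert_self nu T')
    have hcT' : c ∉ T' := fun h => hc (Finset.mem_insert_of_mem h)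
    set Bi : ι → Module.End ℂ M := fun i => X i - c i • (1 : Module.End ℂ M) with hBi
    have hmem : ∀ i, (Bi i) y ∈ (Egen X c ⊔ T'.sup (Egen X)) ⊔ Egen X nu := by
      intro i
      have := hy i
      rw [Finset.sup_insert] at this
      rwa [sup_comm (Egen X nu) (T'.sup (Egen X)), ← sup_assoc] at this
    choose d hd aa ha hz using fun i => Submodule.mem_sup.mp (hmem i)
    have hBcomm : ∀ i i', Commute (Bi i) (Bi i') := fun i i' =>
      commute_sub_smul_one (hX i i') _ _
    have hBXcomm : ∀ i j, Commute (Bi i) (X j) := fun i j =>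
      (hX i j).sub_left ((Commute.one_left (X j)).smul_left (c i))
    have hcompat : ∀ i i', (Bi i) (aa i') = (Bi i') (aa i) := by
      intro i i'
      have hzz : (Bi i) ((Bi i') y) = (Bi i') ((Bi i) y) := by
        rw [← Module.End.mul_apply, ← Module.End.mul_apply, (hBcomm i i').eq]
      have heq : (Bi i) (d i') + (Bi i) (aa i') = (Bi i') (d i) + (Bi i') (aa i) := by
        rw [← map_add, ← map_add, hz i', hz i]; exact hzz
      set w := (Bi i) (aa i') - (Bi i') (aa i) with hw
      have hw1 : w ∈ Egen X nu := Submodule.sub_mem _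
        (Egen_stab X (Bi i) (hBXcomm i) (ha i')) (Egen_stab X (Bi i') (hBXcomm i') (ha i))
      have hwF : w ∈ (insert c T').sup (Egen X) := by
        have hw2 : w = (Bi i') (d i) - (Bi i) (d i') := by
          rw [hw]; linear_combination (norm := abel) heq
        have hdmem : ∀ j j', (Bi j) (d j') ∈ (insert c T').sup (Egen X) := by
          intro j j'
          refine supEgen_stab X (Bi j) (hBXcomm j) ?_
          rw [Finset.sup_insert]
          exact hd j'
        rw [hw2]
        exact Submodule.sub_mem _ (hdmem i' i) (hdmem i i')
      have hnu_notin : nu ∉ insert c T' := by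
        simp only [Finset.mem_insert]
        push_neg
        exact ⟨hcnu.symm, hni⟩
      have : w = 0 := Egen_sep X hX hnu_notin hw1 hwF
      exact sub_eq_zero.mp this
    obtain ⟨i0, hi0⟩ := Function.ne_iff.mp (Ne.symm hcnu)
    have hkill : ∀ i, ∃ k, ((X i0 - nu i0 • (1 : Module.End ℂ M)) ^ k) (aa i) = 0 :=
      fun i => (mem_Egen X).mp (ha i) i0
    choose K hK using hkill
    set k := (Finset.univ : Finset ι).sup K with hk
    have hkK : ∀ i, ((X i0 - nu i0 • (1 : Module.End ℂ M)) ^ k) (aa i) = 0 :=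
      fun i => pow_kill_mono _ (Finset.le_sup (Finset.mem_univ i)) (hK i)
    set e := c i0 - nu i0 with he
    set Ff : M → M := fun b => -(∑ t ∈ Finset.range k,
      (e⁻¹) ^ (t + 1) • ((X i0 - nu i0 • (1 : Module.End ℂ M)) ^ t) b) with hFf
    have htele : ∀ b : M, ((X i0 - nu i0 • (1 : Module.End ℂ M)) ^ k) b = 0 →
        (Bi i0) (Ff b) = b := by
      intro b hb
      exact tele (X i0) (Ne.symm hi0) k hb
    have hpush : ∀ (h : Module.End ℂ M), Commute h (X i0) → ∀ b, h (Ff b) = Ff (h b) := by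
      intro h hcomm b
      rw [hFf]
      simp only [map_neg, map_sum, map_smul]
      congr 1
      refine Finset.sum_congr rfl fun t _ => ?_
      congr 1
      have : Commute h ((X i0 - nu i0 • (1 : Module.End ℂ M)) ^ t) :=
        (hcomm.sub_right ((Commute.one_right h).smul_right (nu i0))).pow_right t
      rw [← Module.End.mul_apply, this.eq, Module.End.mul_apply]
    set f := Ff (aa i0) with hf
    have hfmem : f ∈ Egen X nu := by
      rw [hf, hFf]
      refine Submodule.neg_mem _ (Submodule.sum_mem _ fun t _ => Submodule.smul_mem _ _ ?_)
      refine Egen_stab X _ (fun j => ?_) (ha i0)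
      exact (((hX i0 j).sub_left ((Commute.one_left (X j)).smul_left (nu i0)))).pow_left t
    have hfB : ∀ i, (Bi i) f = aa i := by
      intro i
      rw [hf, hpush (Bi i) (hBXcomm i (i0)) (aa i0), hcompat i i0,
        ← hpush (Bi i0) (hBXcomm i0 i0) (aa i), htele (aa i) (hkK i)]
    have hy' : ∀ i, (Bi i) (y - f) ∈ Egen X c ⊔ T'.sup (Egen X) := by
      intro i
      rw [map_sub, hfB i]
      have : (Bi i) y - aa i = d i := by
        rw [← hz i]; abel
      rw [this]
      exact hd i
    have hyf : y - f ∈ Egen X c ⊔ T'.sup (Egen X) := ih hcT' (y - f) hy'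
    have hfin : y = (y - f) + f := by abel
    rw [hfin, Finset.sup_insert]
    have h1 : Egen X c ⊔ T'.sup (Egen X) ≤ Egen X c ⊔ (Egen X nu ⊔ T'.sup (Egen X)) :=
      sup_le_sup_left le_sup_right _
    have h2 : Egen X nu ≤ Egen X c ⊔ (Egen X nu ⊔ T'.sup (Egen X)) :=
      le_trans le_sup_left le_sup_right
    exact Submodule.add_mem _ (h1 hyf) (h2 hfmem)

end GenEig





section Perm

variable {n : ℕ}

/-- The inversion set of a permutation of `Fin n`. -/
def pInv (u : Equiv.Perm (Fin n)) : Finset (Fin n × Fin n) :=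
  Finset.univ.filter (fun p => p.1 < p.2 ∧ u p.2 < u p.1)

lemma mem_pInv {u : Equiv.Perm (Fin n)} {p : Fin n × Fin n} :
    p ∈ pInv u ↔ p.1 < p.2 ∧ u p.2 < u p.1 := by
  simp [pInv]

lemma swap_adj_lt {j k p q : Fin n} (hjk : (j : ℕ) + 1 = k) (hpq : p < q)
    (hne : ¬(p = j ∧ q = k)) : Equiv.swap j k p < Equiv.swap j k q := by
  have hlt : ∀ a b : Fin n, (a : ℕ) < (b : ℕ) → a < b := fun a b h => h
  have hv : ((p : ℕ) < (q : ℕ)) := hpq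
  rcases eq_or_ne p j with rfl | hpj
  · have hqk : q ≠ k := fun h => hne ⟨rfl, h⟩
    have hqj : q ≠ p := (ne_of_gt hpq)
    rw [Equiv.swap_apply_left, Equiv.swap_apply_of_ne_of_ne hqj hqk]
    apply hlt
    have h1 : (q : ℕ) ≠ (k : ℕ) := fun h => hqk (Fin.ext h)
    omega
  · rcases eq_or_ne p k with rfl | hpk
    · have hqj : q ≠ j := by
        intro h
        rw [h] at hv
        omega
      have hqk : q ≠ p := (ne_of_gt hpq)
      rw [Equiv.swap_apply_right, Equiv.swap_apply_of_ne_of_ne hqj hqk]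
      apply hlt
      have h1 : (q : ℕ) ≠ (j : ℕ) := fun h => hqj (Fin.ext h)
      omega
    · rw [Equiv.swap_apply_of_ne_of_ne hpj hpk]
      rcases eq_or_ne q j with rfl | hqj
      · rw [Equiv.swap_apply_left]
        apply hlt
        omega
      · rcases eq_or_ne q k with rfl | hqk
        · rw [Equiv.swap_apply_right]
          apply hlt
          have h1 : (p : ℕ) ≠ (j : ℕ) := fun h => hpj (Fin.ext h)
          omega
        · rw [Equiv.swap_apply_of_ne_of_ne hqj hqk]
          exact hpq

lemma pInv_one : pInv (1 : Equiv.Perm (Fin n)) = ∅ := by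
  ext p
  simp only [mem_pInv, Finset.notMem_empty, iff_false, not_and, Equiv.Perm.one_apply]
  intro h
  exact not_lt.mpr h.le

lemma pInv_swap_adj {j k : Fin n} (hjk : (j : ℕ) + 1 = k) :
    pInv (Equiv.swap j k) = {(j, k)} := by
  have hjk' : j < k := by rw [Fin.lt_def]; omega
  ext p
  simp only [mem_pInv, Finset.mem_singleton]
  constructor
  · rintro ⟨h1, h2⟩
    by_contra hne
    have : ¬(p.1 = j ∧ p.2 = k) := by
      intro hh
      exact hne (Prod.ext hh.1 hh.2)
    exact absurd (swap_adj_lt hjk h1 this) (not_lt.mpr h2.le)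
  · rintro rfl
    refine ⟨hjk', ?_⟩
    rw [Equiv.swap_apply_left, Equiv.swap_apply_right]
    exact hjk'

lemma len_mul_swap_adj (u : Equiv.Perm (Fin n)) {j k : Fin n} (hjk : (j : ℕ) + 1 = k) :
    (pInv (u * Equiv.swap j k)).card =
      if u k < u j then (pInv u).card - 1 else (pInv u).card + 1 := by
  have hjk' : j < k := by rw [Fin.lt_def]; omega
  set s := Equiv.swap j k with hs
  have hskj : s k = j := Equiv.swap_apply_right j k
  have hsjk : s j = k := Equiv.swap_apply_left j k
  have hinvol : ∀ x, s (s x) = x := fun x => by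
    rw [hs]; exact Equiv.swap_apply_self j k x
  have happ : ∀ x, (u * s) x = u (s x) := fun x => rfl
  have hmap : ∀ (v : Equiv.Perm (Fin n)), ∀ p : Fin n × Fin n,
      p.1 < p.2 → p ≠ (j, k) → ((s p.1, s p.2) ∈ (pInv v).erase (j, k)
        ↔ v (s p.2) < v (s p.1)) := by
    intro v p h1 hpne
    have hne : ¬(p.1 = j ∧ p.2 = k) := fun hh => hpne (Prod.ext hh.1 hh.2)
    have horder : s p.1 < s p.2 := swap_adj_lt hjk h1 hne
    constructor
    · intro hmem
      exact (mem_pInv.mp (Finset.mem_erase.mp hmem).2).2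
    · intro hv
      refine Finset.mem_erase.mpr ⟨?_, mem_pInv.mpr ⟨horder, hv⟩⟩
      intro hh
      have h1' : s p.1 = j := congrArg Prod.fst hh
      have h2' : s p.2 = k := congrArg Prod.snd hh
      have hp1 : p.1 = k := by
        have := congrArg s h1'
        rwa [hinvol, hsjk] at this
      have hp2 : p.2 = j := by
        have := congrArg s h2'
        rwa [hinvol, hskj] at this
      rw [hp1, hp2] at h1
      exact absurd h1 (not_lt.mpr hjk'.le)
  have hbij : ((pInv (u * s)).erase (j, k)).card = ((pInv u).erase (j, k)).card := by
    refine Finset.card_bij' (fun p _ => (s p.1, s p.2)) (fun p _ => (s p.1, s p.2))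
      ?_ ?_ ?_ ?_
    · intro p hp
      obtain ⟨hpne, hpmem⟩ := Finset.mem_erase.mp hp
      obtain ⟨h1, h2⟩ := mem_pInv.mp hpmem
      refine (hmap u p h1 hpne).mpr ?_
      simpa only [happ, hinvol] using h2
    · intro p hp
      obtain ⟨hpne, hpmem⟩ := Finset.mem_erase.mp hp
      obtain ⟨h1, h2⟩ := mem_pInv.mp hpmem
      refine (hmap (u * s) p h1 hpne).mpr ?_
      simpa only [happ, hinvol] using h2
    · intro p _; exact Prod.ext (hinvol _) (hinvol _)
    · intro p _; exact Prod.ext (hinvol _) (hinvol _)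
  have hjkmem : (j, k) ∈ pInv (u * s) ↔ u j < u k := by
    rw [mem_pInv]
    constructor
    · intro h
      have := h.2
      rwa [happ, happ, hskj, hsjk] at this
    · intro h
      refine ⟨hjk', ?_⟩
      rw [happ, happ, hskj, hsjk]
      exact h
  have hjkmem' : (j, k) ∈ pInv u ↔ u k < u j :=
    ⟨fun h => (mem_pInv.mp h).2, fun h => mem_pInv.mpr ⟨hjk', h⟩⟩
  have hne' : u j ≠ u k := fun h => (ne_of_lt hjk') (u.injective h)
  by_cases hd : u k < u j
  · rw [if_pos hd]
    have h1 : (j, k) ∉ pInv (u * s) := fun h => absurd (hjkmem.mp h) (not_lt.mpr hd.le)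
    have h2 : (j, k) ∈ pInv u := hjkmem'.mpr hd
    rw [← Finset.erase_eq_of_notMem h1, hbij, Finset.card_erase_of_mem h2]
  · rw [if_neg hd]
    have hdlt : u j < u k := lt_of_le_of_ne (not_lt.mp hd) hne'
    have h1 : (j, k) ∈ pInv (u * s) := hjkmem.mpr hdlt
    have h2 : (j, k) ∉ pInv u := fun h => absurd (hjkmem'.mp h) hd
    rw [← Finset.card_erase_add_one h1, hbij, Finset.erase_eq_of_notMem h2]

lemma exists_adj_descent (u : Equiv.Perm (Fin n)) (hu : u ≠ 1) :
    ∃ j k : Fin n, (j : ℕ) + 1 = k ∧ u k < u j := by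
  by_contra hcon
  push_neg at hcon
  have hadj : ∀ j k : Fin n, (j : ℕ) + 1 = k → u j < u k := by
    intro j k hjk
    have h1 : u j ≤ u k := hcon j k hjk
    have h2 : u j ≠ u k := by
      intro h
      have : j = k := u.injective h
      rw [this] at hjk
      omega
    exact lt_of_le_of_ne h1 h2
  have key : ∀ d : ℕ, ∀ a b : Fin n, (a : ℕ) + d + 1 = b → u a < u b := by
    intro d
    induction d with
    | zero => intro a b hb; exact hadj a b (by omega)
    | succ d ih =>
      intro a b hb
      have hcn : (a : ℕ) + d + 1 < n := by
        have := b.isLt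
        omega
      set c : Fin n := ⟨(a : ℕ) + d + 1, hcn⟩ with hc
      have hcv : (c : ℕ) = (a : ℕ) + d + 1 := rfl
      have hcb : (c : ℕ) + 1 = b := by omega
      exact lt_trans (ih a c hcv.symm) (hadj c b hcb)
  have hmono : StrictMono u := by
    intro a b hab
    have h1 : (a : ℕ) < b := hab
    rcases Nat.exists_eq_add_of_lt h1 with ⟨d, hd⟩
    exact key d a b (by omega)
  have hmono' : StrictMono (u.symm : Fin n → Fin n) := by
    intro a b hab
    by_contra hcon2
    have h2 : u.symm b ≤ u.symm a := not_lt.mp hcon2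
    have h4 := hmono.monotone h2
    simp only [Equiv.apply_symm_apply] at h4
    exact absurd hab (not_lt.mpr h4)
  haveI hwf : WellFoundedLT (Fin n) := inferInstance
  apply hu
  ext x
  have h1 : x ≤ u x := hmono.le_apply
  have h2 : u x ≤ u.symm (u x) := hmono'.le_apply
  simp only [Equiv.symm_apply_apply] at h2
  exact le_antisymm h2 h1

lemma len_mul_swap_lt : ∀ (N : ℕ) (u : Equiv.Perm (Fin n)), (pInv u).card ≤ N →
    ∀ k l : Fin n, k < l → u l < u k →
      (pInv (u * Equiv.swap k l)).card < (pInv u).card := by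
  intro N
  induction N with
  | zero =>
    intro u hu k l hkl hul
    have hm : (k, l) ∈ pInv u := mem_pInv.mpr ⟨hkl, hul⟩
    have := Finset.card_pos.mpr ⟨(k, l), hm⟩
    omega
  | succ N ih =>
    intro u hu k l hkl hul
    have hmem : (k, l) ∈ pInv u := mem_pInv.mpr ⟨hkl, hul⟩
    have hcard1 : 1 ≤ (pInv u).card := Finset.card_pos.mpr ⟨(k, l), hmem⟩
    have hu1 : u ≠ 1 := by
      rintro rfl
      simp only [Equiv.Perm.one_apply] at hul
      exact absurd hul (not_lt.mpr hkl.le)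
    obtain ⟨j, k0, hjk0, hdesc⟩ := exists_adj_descent u hu1
    set s := Equiv.swap j k0 with hs
    have hinvol : ∀ x, s (s x) = x := fun x => by
      rw [hs]; exact Equiv.swap_apply_self j k0 x
    have hlen1 : (pInv (u * s)).card = (pInv u).card - 1 := by
      rw [hs, len_mul_swap_adj u hjk0, if_pos hdesc]
    by_cases hc : (k, l) = (j, k0)
    · have hk : k = j := congrArg Prod.fst hc
      have hl : l = k0 := congrArg Prod.snd hc
      rw [hk, hl, ← hs]
      omega
    · have hne : ¬(k = j ∧ l = k0) := fun hh => hc (Prod.ext hh.1 hh.2)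
      have hkl2 : s k < s l := swap_adj_lt hjk0 hkl hne
      have hinv2 : (u * s) (s l) < (u * s) (s k) := by
        have happ2 : ∀ x, (u * s) (s x) = u x := by
          intro x
          have : (u * s) (s x) = u (s (s x)) := rfl
          rw [this, hinvol]
        rw [happ2, happ2]
        exact hul
      have hle : (pInv (u * s)).card ≤ N := by omega
      have hihres := ih (u * s) hle (s k) (s l) hkl2 hinv2
      have hswap : Equiv.swap (s k) (s l) = s * Equiv.swap k l * s⁻¹ :=
        Equiv.swap_apply_apply s k l
      have hsinv : s⁻¹ = s := by rw [hs]; exact Equiv.swap_inv j k0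
      have heq : u * Equiv.swap k l = (u * s) * Equiv.swap (s k) (s l) * s := by
        rw [hswap, hsinv]
        ext x
        simp only [Equiv.Perm.mul_apply]
        rw [hinvol, hinvol]
      have hfin : (pInv ((u * s) * Equiv.swap (s k) (s l) * s)).card ≤
          (pInv ((u * s) * Equiv.swap (s k) (s l))).card + 1 := by
        rw [hs, len_mul_swap_adj _ hjk0]
        split_ifs <;> omega
      rw [heq]
      omega

end Perm

section Diagram

variable {LL mm : ℕ} {pp : Fin (LL * mm) → ℤ × ℤ} {mu : ℤ → ℤ}

lemma ht_one_iff {i : Fin (LL * mm)} :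
    colHeight LL mm pp i = 1 ↔ ∀ j, (pp j).2 = (pp i).2 → j = i := by
  unfold colHeight
  constructor
  · intro h j hj
    obtain ⟨a, ha⟩ := Finset.card_eq_one.mp h
    have hia : i ∈ Finset.univ.filter fun j => (pp j).2 = (pp i).2 := by
      simp
    have hja : j ∈ Finset.univ.filter fun j => (pp j).2 = (pp i).2 := by
      simp [hj]
    rw [ha, Finset.mem_singleton] at hia hja
    rw [hja, hia]
  · intro h
    have : (Finset.univ.filter fun j => (pp j).2 = (pp i).2) = {i} := by
      ext j
      simp only [Finset.mem_filter, Finset.mem_univ, true_and, Finset.mem_singleton]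
      exact ⟨h j, fun hj => by rw [hj]⟩
    rw [this, Finset.card_singleton]

lemma ht_pos (i : Fin (LL * mm)) : 1 ≤ colHeight LL mm pp i := by
  unfold colHeight
  refine Finset.card_pos.mpr ⟨i, ?_⟩
  simp

section WithShape

variable (hmu : ∀ t : ℤ, 1 ≤ t → t < mm → mu (t + 1) ≤ mu t)
  (hran : Set.range pp
    = {p : ℤ × ℤ | 1 ≤ p.1 ∧ p.1 ≤ mm ∧ mu p.1 < p.2 ∧ p.2 ≤ mu p.1 + LL})

include hmu in
lemma mu_anti : ∀ r r' : ℤ, 1 ≤ r → r ≤ r' → r' ≤ mm → mu r' ≤ mu r := by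
  intro r r' h1 h2 h3
  have key : ∀ r'' : ℤ, r ≤ r'' → (r'' ≤ (mm : ℤ) → mu r'' ≤ mu r) :=
    Int.le_induction (motive := fun x _ => x ≤ (mm : ℤ) → mu x ≤ mu r) (fun _ => le_refl _)
      (fun k hk ih hk1 => le_trans (hmu k (le_trans h1 hk) (by omega)) (ih (by omega)))
  exact key r' h2 h3

include hran in
lemma mem_shape (i : Fin (LL * mm)) :
    1 ≤ (pp i).1 ∧ (pp i).1 ≤ mm ∧ mu (pp i).1 < (pp i).2
      ∧ (pp i).2 ≤ mu (pp i).1 + LL := by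
  have h : pp i ∈ Set.range pp := ⟨i, rfl⟩
  rw [hran] at h
  exact h

include hran in
lemma shape_surj (r c : ℤ) (h1 : 1 ≤ r) (h2 : r ≤ mm) (h3 : mu r < c)
    (h4 : c ≤ mu r + LL) : ∃ t, pp t = (r, c) := by
  have h : ((r, c) : ℤ × ℤ) ∈ Set.range pp := by
    rw [hran]
    exact ⟨h1, h2, h3, h4⟩
  exact h

variable (horder : ∀ i j : Fin (LL * mm), i < j ↔
  ((pp i).2 < (pp j).2 ∨ ((pp i).2 = (pp j).2 ∧ (pp i).1 < (pp j).1)))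

include horder in
lemma col_lt_left {i j : Fin (LL * mm)} (hij : i < j) (hi : colHeight LL mm pp i = 1) :
    (pp i).2 < (pp j).2 := by
  rcases (horder i j).mp hij with h | h
  · exact h
  · have : j = i := ht_one_iff.mp hi j h.1.symm
    rw [this] at hij
    exact absurd hij (lt_irrefl i)

include horder in
lemma col_lt_right {i j : Fin (LL * mm)} (hij : i < j) (hj : colHeight LL mm pp j = 1) :
    (pp i).2 < (pp j).2 := by
  rcases (horder i j).mp hij with h | h
  · exact h
  · have : i = j := ht_one_iff.mp hj i h.1
    rw [this] at hij
    exact absurd hij (lt_irrefl j)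

include hmu hran in
lemma ht1_le_mu_pred {x : Fin (LL * mm)} (hx : colHeight LL mm pp x = 1)
    {r : ℤ} (hrx : (pp x).1 = r) (hr2 : 2 ≤ r) : (pp x).2 ≤ mu (r - 1) := by
  by_contra hcon
  push_neg at hcon
  obtain ⟨h1, h2, h3, h4⟩ := mem_shape hran x
  rw [hrx] at h1 h2 h3 h4
  have hle : mu r ≤ mu (r - 1) := by
    have := mu_anti hmu (r - 1) r (by omega) (by omega) h2
    exact this
  obtain ⟨t, ht⟩ := shape_surj hran (r - 1) (pp x).2 (by omega) (by omega) hcon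
    (by omega)
  have hcol : (pp t).2 = (pp x).2 := by rw [ht]
  have := ht_one_iff.mp hx t hcol
  rw [this] at ht
  have : (pp x).1 = r - 1 := by rw [ht]
  omega

include hmu hran in
lemma ht1_gt_mu_succ {x : Fin (LL * mm)} (hx : colHeight LL mm pp x = 1)
    {r : ℤ} (hrx : (pp x).1 = r) (hrm : r < mm) : mu (r + 1) + LL < (pp x).2 := by
  by_contra hcon
  push_neg at hcon
  obtain ⟨h1, h2, h3, h4⟩ := mem_shape hran x
  rw [hrx] at h1 h2 h3 h4
  have hle : mu (r + 1) ≤ mu r := hmu r h1 hrm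
  obtain ⟨t, ht⟩ := shape_surj hran (r + 1) (pp x).2 (by omega) (by omega)
    (by omega) hcon
  have hcol : (pp t).2 = (pp x).2 := by rw [ht]
  have := ht_one_iff.mp hx t hcol
  rw [this] at ht
  have : (pp x).1 = r + 1 := by rw [ht]
  omega

include hmu hran in
lemma between_row {i l : Fin (LL * mm)} (hi : colHeight LL mm pp i = 1)
    (hl : colHeight LL mm pp l = 1) (hrow : (pp i).1 = (pp l).1)
    {c : ℤ} (hc1 : (pp i).2 < c) (hc2 : c < (pp l).2) :
    ∀ j, (pp j).2 = c → (pp j).1 = (pp i).1 := by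
  intro j hj
  set r := (pp i).1 with hr
  obtain ⟨hi1, hi2, hi3, hi4⟩ := mem_shape hran i
  obtain ⟨hl1, hl2, hl3, hl4⟩ := mem_shape hran l
  obtain ⟨hj1, hj2, hj3, hj4⟩ := mem_shape hran j
  rw [← hrow] at hl3 hl4
  set rho := (pp j).1 with hrho
  rcases lt_trichotomy rho r with hlt | heq | hgt
  · exfalso
    have hr2 : (2 : ℤ) ≤ r := by omega
    have hA : (pp l).2 ≤ mu (r - 1) := ht1_le_mu_pred hmu hran hl hrow.symm hr2
    have hanti : mu (r - 1) ≤ mu rho := mu_anti hmu rho (r - 1) hj1 (by omega) (by omega)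
    omega
  · exact heq
  · exfalso
    have hrm : r < (mm : ℤ) := by omega
    have hB : mu (r + 1) + LL < (pp i).2 := ht1_gt_mu_succ hmu hran hi rfl hrm
    have hanti : mu rho ≤ mu (r + 1) := mu_anti hmu (r + 1) rho (by omega) (by omega) hj2
    omega

include hmu hran horder in
lemma between_full {i t l : Fin (LL * mm)} (hinj : Function.Injective pp)
    (hi : colHeight LL mm pp i = 1) (hl : colHeight LL mm pp l = 1)
    (hrow : (pp i).1 = (pp l).1) (hit : i < t) (htl : t < l) :
    colHeight LL mm pp t = 1 ∧ (pp t).1 = (pp i).1 := by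
  have hc1 : (pp i).2 < (pp t).2 := col_lt_left horder hit hi
  have hc2 : (pp t).2 < (pp l).2 := col_lt_right horder htl hl
  have hrowt : (pp t).1 = (pp i).1 := between_row hmu hran hi hl hrow hc1 hc2 t rfl
  refine ⟨?_, hrowt⟩
  rw [ht_one_iff]
  intro j hj
  have hrowj : (pp j).1 = (pp i).1 :=
    between_row (c := (pp t).2) hmu hran hi hl hrow hc1 hc2 j hj
  apply hinj
  have h1 : pp j = ((pp j).1, (pp j).2) := rfl
  have h2 : pp t = ((pp t).1, (pp t).2) := rfl
  rw [h1, h2, hj, hrowj, hrowt]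

include hmu hran horder in
lemma rows_ordered {i l : Fin (LL * mm)} (hi : colHeight LL mm pp i = 1)
    (hl : colHeight LL mm pp l = 1) (hrowlt : (pp i).1 < (pp l).1) : l < i := by
  obtain ⟨hi1, hi2, hi3, hi4⟩ := mem_shape hran i
  obtain ⟨hl1, hl2, hl3, hl4⟩ := mem_shape hran l
  have hrm : (pp i).1 < (mm : ℤ) := by omega
  have hB : mu ((pp i).1 + 1) + LL < (pp i).2 := ht1_gt_mu_succ hmu hran hi rfl hrm
  have hanti : mu ((pp l).1) ≤ mu ((pp i).1 + 1) :=
    mu_anti hmu ((pp i).1 + 1) ((pp l).1) (by omega) (by omega) hl2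
  have hcol : (pp l).2 < (pp i).2 := by omega
  exact (horder l i).mpr (Or.inl hcol)

include hmu hran horder in
lemma adj_content {j k : Fin (LL * mm)} (hinj : Function.Injective pp)
    (hjk : (j : ℕ) + 1 = k) (hj : colHeight LL mm pp j = 1)
    (hk : colHeight LL mm pp k = 1) (hrow : (pp j).1 = (pp k).1) :
    content LL mm pp k = content LL mm pp j + 1 := by
  have hjk' : j < k := by rw [Fin.lt_def]; omega
  have hcol : (pp j).2 < (pp k).2 := col_lt_left horder hjk' hj
  obtain ⟨hj1, hj2, hj3, hj4⟩ := mem_shape hran j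
  obtain ⟨hk1, hk2, hk3, hk4⟩ := mem_shape hran k
  rw [← hrow] at hk3 hk4
  have hcolk : (pp k).2 = (pp j).2 + 1 := by
    by_contra hcon
    have hgt : (pp j).2 + 1 < (pp k).2 := by omega
    obtain ⟨t, ht⟩ := shape_surj hran (pp j).1 ((pp j).2 + 1) hj1 hj2 (by omega)
      (by omega)
    have htc : (pp t).2 = (pp j).2 + 1 := by rw [ht]
    have h1 : j < t := (horder j t).mpr (Or.inl (by omega))
    have h2 : t < k := (horder t k).mpr (Or.inl (by omega))
    rw [Fin.lt_def] at h1 h2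
    omega
  unfold content
  rw [hcolk, ← hrow]
  ring

include hmu hran horder in
lemma inv_in_Dminus {u : Equiv.Perm (Fin (LL * mm))} (hu : u ∈ WDminus LL mm pp)
    (hinj : Function.Injective pp) {k l : Fin (LL * mm)} (hkl : k < l)
    (hul : u l < u k) :
    colHeight LL mm pp k = 1 ∧ colHeight LL mm pp l = 1 ∧ (pp k).1 = (pp l).1 := by
  have hk1 : 1 ≤ colHeight LL mm pp k := ht_pos k
  have hl1 : 1 ≤ colHeight LL mm pp l := ht_pos l
  rcases Nat.lt_or_ge (colHeight LL mm pp k) 2 with hk | hk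
  · rcases Nat.lt_or_ge (colHeight LL mm pp l) 2 with hl | hl
    · -- both height 1
      have hkh : colHeight LL mm pp k = 1 := by omega
      have hlh : colHeight LL mm pp l = 1 := by omega
      refine ⟨hkh, hlh, ?_⟩
      obtain ⟨hukh, hukr⟩ := (hu k).2 hkh
      obtain ⟨hulh, hulr⟩ := (hu l).2 hlh
      rcases lt_trichotomy ((pp k).1) ((pp l).1) with h | h | h
      · exfalso
        have := rows_ordered hmu hran horder hkh hlh h
        exact absurd hkl (not_lt.mpr this.le)
      · exact h
      · exfalso
        have hrr : (pp (u l)).1 < (pp (u k)).1 := by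
          rw [hukr, hulr]; exact h
        have := rows_ordered hmu hran horder hulh hukh hrr
        exact absurd hul (not_lt.mpr this.le)
    · -- k height 1, l height ≥ 2 : u l = l
      exfalso
      have hkh : colHeight LL mm pp k = 1 := by omega
      have hull : u l = l := (hu l).1 hl
      obtain ⟨hukh, hukr⟩ := (hu k).2 hkh
      rw [hull] at hul
      -- k < l < u k, k and u k in D⁻ same row
      obtain ⟨hbad, -⟩ := between_full hmu hran horder hinj hkh hukh hukr.symm hkl hul
      omega
  · have hukk : u k = k := (hu k).1 hk
    rcases Nat.lt_or_ge (colHeight LL mm pp l) 2 with hl | hl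
    · -- k height ≥2 fixed, l height 1
      exfalso
      have hlh : colHeight LL mm pp l = 1 := by omega
      obtain ⟨hulh, hulr⟩ := (hu l).2 hlh
      rw [hukk] at hul
      -- u l < k < l with u l, l in D⁻ same row
      obtain ⟨hbad, -⟩ := between_full hmu hran horder hinj hulh hlh hulr hul hkl
      omega
    · exfalso
      have hull : u l = l := (hu l).1 hl
      rw [hukk, hull] at hul
      exact absurd hul (not_lt.mpr hkl.le)

end WithShape

lemma swap_mem_WDminus {k l : Fin (LL * mm)} (hk : colHeight LL mm pp k = 1)
    (hl : colHeight LL mm pp l = 1) (hrow : (pp k).1 = (pp l).1) :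
    Equiv.swap k l ∈ WDminus LL mm pp := by
  intro i
  constructor
  · intro h2
    have hik : i ≠ k := fun h => by rw [h, hk] at h2; omega
    have hil : i ≠ l := fun h => by rw [h, hl] at h2; omega
    exact Equiv.swap_apply_of_ne_of_ne hik hil
  · intro h1
    rcases eq_or_ne i k with rfl | hik
    · rw [Equiv.swap_apply_left]
      exact ⟨hl, hrow.symm⟩
    · rcases eq_or_ne i l with rfl | hil
      · rw [Equiv.swap_apply_right]
        exact ⟨hk, hrow⟩
      · rw [Equiv.swap_apply_of_ne_of_ne hik hil]
        exact ⟨h1, rfl⟩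

lemma mul_mem_WDminus {u v : Equiv.Perm (Fin (LL * mm))} (hu : u ∈ WDminus LL mm pp)
    (hv : v ∈ WDminus LL mm pp) : u * v ∈ WDminus LL mm pp := by
  intro i
  constructor
  · intro h2
    have h1 : v i = i := (hv i).1 h2
    have : (u * v) i = u (v i) := rfl
    rw [this, h1]
    exact (hu i).1 h2
  · intro h1
    obtain ⟨hvh, hvr⟩ := (hv i).2 h1
    obtain ⟨huh, hur⟩ := (hu (v i)).2 hvh
    have : (u * v) i = u (v i) := rfl
    rw [this]
    exact ⟨huh, by rw [hur, hvr]⟩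

end Diagram

/-- if `w ∈ W̄_{D⁻}` and `w·φ = a·φ` with `a ∈ ℂ*`, then
`a = (−1)^{l(w)}` where `l(w)` is the length of `w` in `S_n`. -/
theorem statement_15 (hL : 2 ≤ L) (hm : 1 ≤ m)
    (hinj : Function.Injective pos)
    (hshape : TypeDLm L m (Set.range pos))
    (horder : ∀ i j : Fin (L * m), i < j ↔
      ((pos i).2 < (pos j).2 ∨ ((pos i).2 = (pos j).2 ∧ (pos i).1 < (pos j).1)))
    {M : Type*} [AddCommGroup M] [Module ℂ M]
    (P : Equiv.Perm (Fin (L * m)) →* Module.End ℂ M)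
    (X : Fin (L * m) → Module.End ℂ M)
    (hXcomm : ∀ i j, X i * X j = X j * X i)
    (hbrel : BrelHolds L m P X)
    (φ : M) (hφ : φ ≠ 0)
    (hwt : ∀ i : Fin (L * m), X i φ = ((-(content L m pos i) - m : ℤ) : ℂ) • φ)
    (w : Equiv.Perm (Fin (L * m))) (hw : w ∈ WDminus L m pos)
    (a : ℂ) (ha : a ≠ 0) (hwφ : P w φ = a • φ) :
    a = (-1 : ℂ) ^ (len L m w) := by
  classical
  obtain ⟨mu, hmu, hran⟩ := hshape
  have hXc : ∀ i j, Commute (X i) (X j) := fun i j => hXcomm i j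
  set lam : Fin (L * m) → ℂ := fun i => ((-(content L m pos i) - m : ℤ) : ℂ) with hlam
  have hwt' : ∀ i, X i φ = lam i • φ := fun i => hwt i
  set SS : Finset (Fin (L * m) → ℂ) :=
    ((Finset.univ.filter (fun u : Equiv.Perm (Fin (L * m)) => u ∈ WDminus L m pos)).image
      (fun u => fun i => lam (u⁻¹ i))).erase lam with hSS
  set F : Submodule ℂ M := SS.sup (Egen X) with hF
  -- stabilizer triviality
  have hlam_ne : ∀ x : Equiv.Perm (Fin (L * m)), x ∈ WDminus L m pos → x ≠ 1 →
      (fun i => lam (x⁻¹ i)) ≠ lam := by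
    intro x hx hx1 hcon
    have hex : ∃ i0, x i0 ≠ i0 := by
      by_contra hcc
      push_neg at hcc
      exact hx1 (Equiv.ext hcc)
    obtain ⟨i0, hi0⟩ := hex
    have hhti0 : colHeight L m pos i0 = 1 := by
      rcases Nat.lt_or_ge (colHeight L m pos i0) 2 with h | h
      · have := ht_pos (pp := pos) i0
        omega
      · exact absurd ((hx i0).1 h) hi0
    obtain ⟨hth, htr⟩ := (hx i0).2 hhti0
    have h1 : lam (x⁻¹ (x i0)) = lam (x i0) := congrFun hcon (x i0)
    rw [← Equiv.Perm.mul_apply, inv_mul_cancel, Equiv.Perm.one_apply] at h1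
    have hcont : content L m pos i0 = content L m pos (x i0) := by
      simp only [hlam] at h1
      have h3 : (-(content L m pos i0) - (m : ℤ)) = (-(content L m pos (x i0)) - (m : ℤ)) :=
        Int.cast_injective h1
      omega
    have hcol : (pos (x i0)).2 = (pos i0).2 := by
      unfold content at hcont
      omega
    exact hi0 (ht_one_iff.mp hhti0 (x i0) hcol)
  have hmemS : ∀ x : Equiv.Perm (Fin (L * m)), x ∈ WDminus L m pos → x ≠ 1 →
      (fun i => lam (x⁻¹ i)) ∈ SS := by
    intro x hx hx1
    rw [hSS]
    refine Finset.mem_erase.mpr ⟨hlam_ne x hx hx1, ?_⟩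
    refine Finset.mem_image.mpr ⟨x, ?_, rfl⟩
    simp [hx]
  have hlamS : lam ∉ SS := by rw [hSS]; exact Finset.notMem_erase lam _
  have hφE : φ ∈ Egen X lam := weight_mem_Egen X hwt'
  -- pointwise brel consequence
  have hXP : ∀ (u : Equiv.Perm (Fin (L * m))) (ψ : M) (i : Fin (L * m)),
      X i (P u ψ) = P u (X (u⁻¹ i) ψ)
        + ∑ p ∈ pInv u,
            (((if i = u p.1 then 1 else 0) - (if i = u p.2 then 1 else 0) : ℂ))
              • (P (u * Equiv.swap p.1 p.2) ψ) := by
    intro u ψ i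
    have h := hbrel u i
    have h2 : X i * P u
        = P u * X (u⁻¹ i)
          + ∑ p ∈ pInv u,
              (((if i = u p.1 then 1 else 0) - (if i = u p.2 then 1 else 0) : ℂ))
                • (P (u * Equiv.swap p.1 p.2)) := by
      have h3 := congrArg (fun z => P u * z) h
      rw [← mul_assoc, ← mul_assoc, ← map_mul, mul_inv_cancel, map_one, one_mul] at h3
      rw [h3, mul_add, Finset.mul_sum]
      congr 1
      refine Finset.sum_congr rfl fun p _ => ?_
      rw [mul_smul_comm, ← map_mul]
    have h4 := congrArg (fun (f : Module.End ℂ M) => f ψ) h2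
    simp only [Module.End.mul_apply, LinearMap.add_apply, LinearMap.sum_apply,
      LinearMap.smul_apply] at h4
    exact h4
  -- Claim A
  have claimA : ∀ (j0 k0 : Fin (L * m)), ((j0 : ℕ) + 1 = (k0 : ℕ)) →
      Equiv.swap j0 k0 ∈ WDminus L m pos →
      ∀ (γ : M), (∀ i, X i γ = lam (Equiv.swap j0 k0 i) • γ) →
      (P (Equiv.swap j0 k0) γ = γ) →
      ∀ N (v : Equiv.Perm (Fin (L * m))), v ∈ WDminus L m pos → (pInv v).card < N →
        P v γ ∈ F := by
    intro j0 k0 hjk0 hsmem γ hγwt hγfix N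
    have hsne1 : Equiv.swap j0 k0 ≠ 1 := by
      intro hcon
      have h1 : Equiv.swap j0 k0 j0 = k0 := Equiv.swap_apply_left j0 k0
      rw [hcon, Equiv.Perm.one_apply] at h1
      have : (j0 : ℕ) = (k0 : ℕ) := congrArg Fin.val h1
      omega
    induction N with
    | zero => intro v hv hlenv; omega
    | succ N ihN =>
      intro v hv hlenv
      by_cases hx1 : v * Equiv.swap j0 k0 = 1
      · have hvs : v = Equiv.swap j0 k0 := by
          have := eq_inv_of_mul_eq_one_left hx1
          rwa [Equiv.swap_inv] at this
        rw [hvs, hγfix]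
        have hγE : γ ∈ Egen X (fun i => lam (Equiv.swap j0 k0 i)) := weight_mem_Egen X hγwt
        have hμS : (fun i => lam (Equiv.swap j0 k0 i)) ∈ SS := by
          have h1 := hmemS (Equiv.swap j0 k0) hsmem hsne1
          rwa [Equiv.swap_inv] at h1
        exact (Finset.le_sup (f := Egen X) hμS : Egen X _ ≤ F) hγE
      · set c : Fin (L * m) → ℂ := fun i => lam (Equiv.swap j0 k0 (v⁻¹ i)) with hc
        have hxmem : v * Equiv.swap j0 k0 ∈ WDminus L m pos := mul_mem_WDminus hv hsmem
        have hcS : c ∈ SS := by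
          have h1 := hmemS (v * Equiv.swap j0 k0) hxmem hx1
          have h2 : (fun i => lam ((v * Equiv.swap j0 k0)⁻¹ i)) = c := by
            funext i
            show lam ((v * Equiv.swap j0 k0)⁻¹ i) = lam (Equiv.swap j0 k0 (v⁻¹ i))
            congr 1
          rwa [h2] at h1
        have hz : ∀ i, (X i - c i • (1 : Module.End ℂ M)) (P v γ) ∈ F := by
          intro i
          have h1 := hXP v γ i
          have h2 : X (v⁻¹ i) γ = c i • γ := hγwt (v⁻¹ i)
          rw [h2, map_smul] at h1
          have h3 : (X i - c i • (1 : Module.End ℂ M)) (P v γ)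
              = ∑ p ∈ pInv v,
                  (((if i = v p.1 then 1 else 0) - (if i = v p.2 then 1 else 0) : ℂ))
                    • (P (v * Equiv.swap p.1 p.2) γ) := by
            rw [LinearMap.sub_apply, LinearMap.smul_apply, Module.End.one_apply, h1]
            abel
          rw [h3]
          refine Submodule.sum_mem _ fun p hp => Submodule.smul_mem _ _ ?_
          obtain ⟨hp12, hvp⟩ := mem_pInv.mp hp
          obtain ⟨hht1, hht2, hhtr⟩ := inv_in_Dminus hmu hran horder hv hinj hp12 hvp
          have hswapmem : Equiv.swap p.1 p.2 ∈ WDminus L m pos :=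
            swap_mem_WDminus hht1 hht2 hhtr
          have hlt : (pInv (v * Equiv.swap p.1 p.2)).card < (pInv v).card :=
            len_mul_swap_lt ((pInv v).card) v le_rfl p.1 p.2 hp12 hvp
          exact ihN (v * Equiv.swap p.1 p.2) (mul_mem_WDminus hv hswapmem) (by omega)
        have hsub : F ≤ Egen X c ⊔ (SS.erase c).sup (Egen X) := by
          rw [hF]
          conv_lhs => rw [← Finset.insert_erase hcS]
          rw [Finset.sup_insert]
        have hlift := Egen_lift X hXc (SS.erase c) c (Finset.notMem_erase c SS) (P v γ)
          (fun i => hsub (hz i))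
        have hback : Egen X c ⊔ (SS.erase c).sup (Egen X) ≤ F := by
          apply sup_le
          · exact Finset.le_sup hcS
          · rw [hF]
            exact Finset.sup_mono (Finset.erase_subset c SS)
        exact hback hlift
  -- Claim B
  have claimB : ∀ N (u : Equiv.Perm (Fin (L * m))), u ∈ WDminus L m pos →
      (pInv u).card < N → P u φ - ((-1 : ℂ) ^ (pInv u).card) • φ ∈ F := by
    intro N
    induction N with
    | zero => intro u _ h; omega
    | succ N ihN =>
      intro u hu hlenu
      by_cases hu1 : u = 1
      · rw [hu1, pInv_one, map_one]
        simp only [Finset.card_empty, pow_zero, one_smul, Module.End.one_apply, sub_self]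
        exact Submodule.zero_mem _
      · obtain ⟨j0, k0, hjk0, hdesc⟩ := exists_adj_descent u hu1
        have hjklt : j0 < k0 := by rw [Fin.lt_def]; omega
        have hinvmem : (j0, k0) ∈ pInv u := mem_pInv.mpr ⟨hjklt, hdesc⟩
        obtain ⟨hhtj, hhtk, hrowjk⟩ := inv_in_Dminus hmu hran horder hu hinj hjklt hdesc
        have hcont : content L m pos k0 = content L m pos j0 + 1 :=
          adj_content hmu hran horder hinj hjk0 hhtj hhtk hrowjk
        have hlamjk : lam j0 = lam k0 + 1 := by
          simp only [hlam]
          rw [hcont]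
          push_cast
          ring
        have hsmem : Equiv.swap j0 k0 ∈ WDminus L m pos :=
          swap_mem_WDminus hhtj hhtk hrowjk
        have hsne : j0 ≠ k0 := ne_of_lt hjklt
        have hss : Equiv.swap j0 k0 * Equiv.swap j0 k0 = 1 := Equiv.swap_mul_self j0 k0
        have hγwt : ∀ i, X i (P (Equiv.swap j0 k0) φ + φ)
            = lam (Equiv.swap j0 k0 i) • (P (Equiv.swap j0 k0) φ + φ) := by
          intro i
          have h1 := hXP (Equiv.swap j0 k0) φ i
          rw [pInv_swap_adj hjk0, Finset.sum_singleton] at h1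
          rw [hss, map_one, Equiv.swap_inv] at h1
          rw [hwt' (Equiv.swap j0 k0 i), map_smul] at h1
          have e1 : ((j0, k0) : Fin (L * m) × Fin (L * m)).1 = j0 := rfl
          have e2 : ((j0, k0) : Fin (L * m) × Fin (L * m)).2 = k0 := rfl
          rw [e1, e2] at h1
          simp only [Module.End.one_apply] at h1
          have hco : (((if i = Equiv.swap j0 k0 j0 then 1 else 0)
                - (if i = Equiv.swap j0 k0 k0 then 1 else 0) : ℂ)) + lam i
              = lam (Equiv.swap j0 k0 i) := by
            rw [Equiv.swap_apply_left, Equiv.swap_apply_right]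
            rcases eq_or_ne i j0 with rfl | hij
            · rw [if_neg hsne, if_pos rfl, Equiv.swap_apply_left, hlamjk]
              ring
            · rcases eq_or_ne i k0 with rfl | hik
              · rw [if_pos rfl, if_neg (Ne.symm hsne), Equiv.swap_apply_right, hlamjk]
                ring
              · rw [if_neg hij, if_neg hik, Equiv.swap_apply_of_ne_of_ne hij hik]
                ring
          rw [map_add, h1, hwt' i, smul_add]
          rw [add_assoc, ← add_smul, hco]
        have hγfix : P (Equiv.swap j0 k0) (P (Equiv.swap j0 k0) φ + φ)
            = P (Equiv.swap j0 k0) φ + φ := by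
          rw [map_add]
          have h1 : P (Equiv.swap j0 k0) (P (Equiv.swap j0 k0) φ) = φ := by
            rw [← Module.End.mul_apply, ← map_mul, hss, map_one, Module.End.one_apply]
          rw [h1]
          abel
        have hu'mem : u * Equiv.swap j0 k0 ∈ WDminus L m pos := mul_mem_WDminus hu hsmem
        have hlen' : (pInv (u * Equiv.swap j0 k0)).card = (pInv u).card - 1 := by
          rw [len_mul_swap_adj u hjk0, if_pos hdesc]
        have hcard1 : 1 ≤ (pInv u).card := Finset.card_pos.mpr ⟨_, hinvmem⟩
        have hAres : P (u * Equiv.swap j0 k0) (P (Equiv.swap j0 k0) φ + φ) ∈ F :=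
          claimA j0 k0 hjk0 hsmem _ hγwt hγfix
            ((pInv (u * Equiv.swap j0 k0)).card + 1) (u * Equiv.swap j0 k0) hu'mem
            (by omega)
        have hBres := ihN (u * Equiv.swap j0 k0) hu'mem (by omega)
        have hdecomp : P u φ
            = P (u * Equiv.swap j0 k0) (P (Equiv.swap j0 k0) φ + φ)
              - P (u * Equiv.swap j0 k0) φ := by
          have h2 : P (u * Equiv.swap j0 k0) (P (Equiv.swap j0 k0) φ) = P u φ := by
            rw [← Module.End.mul_apply, ← map_mul, mul_assoc, hss, mul_one]
          rw [map_add, h2]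
          abel
        have hsign : ((-1 : ℂ) ^ (pInv u).card)
            = -((-1 : ℂ) ^ (pInv (u * Equiv.swap j0 k0)).card) := by
          rw [hlen']
          have hexp : (pInv u).card = ((pInv u).card - 1) + 1 := by omega
          conv_lhs => rw [hexp]
          rw [pow_succ]
          ring
        have hfin : P u φ - ((-1 : ℂ) ^ (pInv u).card) • φ
            = P (u * Equiv.swap j0 k0) (P (Equiv.swap j0 k0) φ + φ)
              - (P (u * Equiv.swap j0 k0) φ
                - ((-1 : ℂ) ^ (pInv (u * Equiv.swap j0 k0)).card) • φ) := by
          rw [hdecomp, hsign, neg_smul]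
          abel
        rw [hfin]
        exact Submodule.sub_mem _ hAres hBres
  -- conclusion
  have hfinal := claimB ((pInv w).card + 1) w hw (by omega)
  rw [hwφ] at hfinal
  have hsm : a • φ - ((-1 : ℂ) ^ (pInv w).card) • φ
      = (a - (-1 : ℂ) ^ (pInv w).card) • φ := (sub_smul _ _ _).symm
  rw [hsm] at hfinal
  have hEl : (a - (-1 : ℂ) ^ (pInv w).card) • φ ∈ Egen X lam := Submodule.smul_mem _ _ hφE
  have hz0 : (a - (-1 : ℂ) ^ (pInv w).card) • φ = 0 := Egen_sep X hXc hlamS hEl hfinal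
  rcases smul_eq_zero.mp hz0 with h | h
  · have hlw : len L m w = (pInv w).card := rfl
    rw [hlw]
    exact sub_eq_zero.mp h
  · exact absurd h hφ

end SkewIso


end
end

section
/- For integers 0 ≤ d ≤ l, every normally ordered semi-infinite wedge u_{k_1}∧u_{k_2}∧··· in the charge-M Fock space of degree d satisfies k_i = M − i + 1 for all i > s + dNL (where M ≡ s mod NL, 0 ≤ s < NL); consequently the map ρ_l^d : V_{s+lNL}^d → F_M^d, w ↦ w∧|M − s − lNL⟩, is an isomorphism of vector spaces. -/
noncomputable section

/-!
Charge-`M` Fock space and finite wedges.  Basis vectors `u_k` of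
`V_aff = ℂ[z^{±1}] ⊗ ℂ^L ⊗ ℂ^N` are labeled by `k ∈ ℤ` via
`k = k̄ − N(k̇ + L·k̲)` with `k̄ ∈ {1,…,N}`, `k̇ ∈ {1,…,L}`, `k̲ ∈ ℤ`.
A normally ordered semi-infinite wedge of charge `M` is a strictly decreasing
sequence `(k_i)` (0-indexed here, so `k_{i+1} = f i`) with `f i = M − i` for all
but finitely many `i`; its degree is `Σ_i (o̲_i − k̲_i)` with `o_i = M − i`.
`V_{s+lNL}` is the span of normally ordered finite wedges of `s + lNL` factors
whose last momentum `k` satisfies `k̲ ≤ o̲`; `ρ_l^d(w) = w ∧ |M − s − lNL⟩`.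
-/

namespace WedgeDeg

/-- `k̄ ∈ {1,…,N}`. -/
def kbar (N : ℕ) (k : ℤ) : ℤ := (k - 1) % N + 1

/-- `k̇ + L·k̲ ∈ ℤ`. -/
def kmid (N L : ℕ) (k : ℤ) : ℤ := (kbar N k - k) / N

/-- `k̇ ∈ {1,…,L}`. -/
def kdot (N L : ℕ) (k : ℤ) : ℤ := (kmid N L k - 1) % L + 1

/-- `k̲ ∈ ℤ`. -/
def kund (N L : ℕ) (k : ℤ) : ℤ := (kmid N L k - kdot N L k) / L

/-- Degree of a semi-infinite wedge of charge `M` (0-indexed momenta `f`). -/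
def degF (N L : ℕ) (M : ℤ) (f : ℕ → ℤ) : ℤ :=
  ∑ᶠ i : ℕ, (kund N L (M - i) - kund N L (f i))

/-- Degree of a finite wedge of `n` factors inside the charge-`M` picture. -/
def degV (N L : ℕ) (M : ℤ) (n : ℕ) (g : Fin n → ℤ) : ℤ :=
  ∑ i : Fin n, (kund N L (M - i.1) - kund N L (g i))

/-- The extension map `ρ_l^d : w ↦ w ∧ |M − s − lNL⟩`, on momentum labels. -/
def extWedge (M : ℤ) (n : ℕ) (g : Fin n → ℤ) : ℕ → ℤ :=
  fun i => if h : i < n then g ⟨i, h⟩ else M - i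

lemma ediv_facts {P : ℤ} (hP : 0 < P) (a : ℤ) : P * (a / P) ≤ a ∧ a < P * (a / P) + P := by
  have h1 := Int.mul_ediv_add_emod a P
  have h2 := Int.emod_nonneg a hP.ne'
  have h3 := Int.emod_lt_of_pos a hP
  omega

lemma my_ediv_ediv {b c : ℤ} (hb : 0 < b) (hc : 0 < c) (a : ℤ) : a / b / c = a / (b * c) := by
  obtain ⟨h1, h2⟩ := ediv_facts hb a
  obtain ⟨h3, h4⟩ := ediv_facts hc (a / b)
  have hbc : 0 < b * c := mul_pos hb hc
  have key : a = (a - b * c * (a / b / c)) + (a / b / c) * (b * c) := by ring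
  have hr0 : 0 ≤ a - b * c * (a / b / c) := by nlinarith
  have hr1 : a - b * c * (a / b / c) < b * c := by nlinarith
  rw [key, Int.add_mul_ediv_right _ _ hbc.ne', Int.ediv_eq_zero_of_lt hr0 (by omega)]
  ring

lemma neg_sub_one_ediv {P : ℤ} (hP : 0 < P) (q : ℤ) : (-q - 1) / P = -(q / P) - 1 := by
  obtain ⟨h1, h2⟩ := ediv_facts hP q
  have h : -q - 1 = (P * (q / P) + P - 1 - q) + (-(q / P) - 1) * P := by ring
  rw [h, Int.add_mul_ediv_right _ _ hP.ne', Int.ediv_eq_zero_of_lt (by omega) (by omega)]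
  ring

lemma kund_eq (N L : ℕ) (hN : 0 < N) (hL : 0 < L) (k : ℤ) :
    kund N L k = -((k - 1) / ((N : ℤ) * L)) - 1 := by
  have hN' : (0:ℤ) < N := by exact_mod_cast hN
  have hL' : (0:ℤ) < L := by exact_mod_cast hL
  set q : ℤ := (k - 1) / N with hq
  have hmid : kmid N L k = -q := by
    have h1 : (k - 1) % N = (k - 1) - N * q := by rw [hq, Int.emod_def]
    have h2 : kbar N k - k = -q * N := by rw [kbar, h1]; ring
    rw [kmid, h2, Int.mul_ediv_cancel _ hN'.ne']
  have hund : kund N L k = (kmid N L k - 1) / L := by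
    have h1 : (kmid N L k - 1) % L = (kmid N L k - 1) - L * ((kmid N L k - 1) / L) := by
      rw [Int.emod_def]
    have h2 : kmid N L k - kdot N L k = ((kmid N L k - 1) / L) * L := by rw [kdot, h1]; ring
    rw [kund, h2, Int.mul_ediv_cancel _ hL'.ne']
  rw [hund, hmid, show (-q : ℤ) - 1 = -q - 1 from rfl, neg_sub_one_ediv hL' q, hq,
    my_ediv_ediv hN' hL']

lemma P_pos {N L : ℕ} (hN : 0 < N) (hL : 0 < L) : (0:ℤ) < (N:ℤ) * L := by
  have hN' : (0:ℤ) < N := by exact_mod_cast hN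
  have hL' : (0:ℤ) < L := by exact_mod_cast hL
  exact mul_pos hN' hL'

variable {N L : ℕ}

lemma kund_antitone (hN : 0 < N) (hL : 0 < L) {a b : ℤ} (h : a ≤ b) : kund N L b ≤ kund N L a := by
  rw [kund_eq N L hN hL, kund_eq N L hN hL]
  have := Int.ediv_le_ediv (P_pos hN hL) (sub_le_sub_right h 1)
  omega

/-- If `m ≡ 0 mod NL` then `kund m = -(m/NL)`. -/
lemma kund_of_emod_zero (hN : 0 < N) (hL : 0 < L) {m : ℤ} (hm : m % ((N:ℤ) * L) = 0) :
    kund N L m = -(m / ((N:ℤ) * L)) := by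
  have hP := P_pos hN hL
  have hmul : m = ((N:ℤ) * L) * (m / ((N:ℤ) * L)) := by
    have := Int.mul_ediv_add_emod m ((N:ℤ) * L); omega
  have h : (m - 1) / ((N:ℤ) * L) = m / ((N:ℤ) * L) - 1 := by
    have h2 : m - 1 = (((N:ℤ) * L) - 1) + (m / ((N:ℤ) * L) - 1) * ((N:ℤ) * L) := by
      linear_combination hmul
    rw [h2, Int.add_mul_ediv_right _ _ hP.ne', Int.ediv_eq_zero_of_lt (by omega) (by omega)]
    ring
  rw [kund_eq N L hN hL, h]; ring

/-- If `m ≡ 0 mod NL` and `m + 1 ≤ f`, then `kund f ≤ kund m - 1`. -/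
lemma kund_jump (hN : 0 < N) (hL : 0 < L) {m f : ℤ} (hm : m % ((N:ℤ) * L) = 0)
    (hf : m + 1 ≤ f) : kund N L f ≤ kund N L m - 1 := by
  have hP := P_pos hN hL
  have hmul : m = ((N:ℤ) * L) * (m / ((N:ℤ) * L)) := by
    have := Int.mul_ediv_add_emod m ((N:ℤ) * L); omega
  have h1 : m / ((N:ℤ) * L) ≤ (f - 1) / ((N:ℤ) * L) := by
    calc m / ((N:ℤ) * L) = (((N:ℤ) * L) * (m / ((N:ℤ) * L))) / ((N:ℤ) * L) := by
          rw [Int.mul_ediv_cancel_left _ hP.ne']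
    _ ≤ (f - 1) / ((N:ℤ) * L) := Int.ediv_le_ediv hP (by omega)
  rw [kund_eq N L hN hL, kund_of_emod_zero hN hL hm]
  omega

/-- If `m ≡ 0 mod NL`, then `kund g ≤ kund (m+1) ↔ m + 1 ≤ g`. -/
lemma kund_le_iff (hN : 0 < N) (hL : 0 < L) {m g : ℤ} (hm : m % ((N:ℤ) * L) = 0) :
    kund N L g ≤ kund N L (m + 1) ↔ m + 1 ≤ g := by
  have hP := P_pos hN hL
  have hmul : m = ((N:ℤ) * L) * (m / ((N:ℤ) * L)) := by
    have := Int.mul_ediv_add_emod m ((N:ℤ) * L); omega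
  rw [kund_eq N L hN hL, kund_eq N L hN hL]
  have h0 : (m + 1 - 1) / ((N:ℤ) * L) = m / ((N:ℤ) * L) := by simp
  rw [h0]
  constructor
  · intro h
    have h1 : m / ((N:ℤ) * L) ≤ (g - 1) / ((N:ℤ) * L) := by omega
    have h2 := (ediv_facts hP (g - 1)).1
    have h3 : ((N:ℤ) * L) * (m / ((N:ℤ) * L)) ≤ ((N:ℤ) * L) * ((g - 1) / ((N:ℤ) * L)) :=
      mul_le_mul_of_nonneg_left h1 hP.le
    omega
  · intro h
    have h1 : m / ((N:ℤ) * L) ≤ (g - 1) / ((N:ℤ) * L) := by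
      calc m / ((N:ℤ) * L) = (((N:ℤ) * L) * (m / ((N:ℤ) * L))) / ((N:ℤ) * L) := by
            rw [Int.mul_ediv_cancel_left _ hP.ne']
      _ ≤ (g - 1) / ((N:ℤ) * L) := Int.ediv_le_ediv hP (by omega)
    omega

lemma gap {f : ℕ → ℤ} (hf : StrictAnti f) (i k : ℕ) : f (i + k) + k ≤ f i := by
  induction k with
  | zero => simp
  | succ k ih =>
    have h := hf (show i + k < i + (k + 1) by omega)
    have e : f (i + (k + 1)) = f ((i + k) + 1) := rfl
    push_cast
    omega

lemma ge_vac {M : ℤ} {f : ℕ → ℤ} (hf : StrictAnti f) {N₀ : ℕ}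
    (hN₀ : ∀ i ≥ N₀, f i = M - i) (i : ℕ) : M - i ≤ f i := by
  have hj : f (max i N₀) = M - (max i N₀) := hN₀ _ (le_max_right _ _)
  have hg := gap hf i (max i N₀ - i)
  have e : i + (max i N₀ - i) = max i N₀ := by omega
  rw [e, hj] at hg
  have : ((max i N₀ : ℕ) : ℤ) = max i N₀ := rfl
  omega


lemma degF_extWedge (N L : ℕ) (M : ℤ) (n : ℕ) (g : Fin n → ℤ) :
    degF N L M (extWedge M n g) = degV N L M n g := by
  have hsupp : Function.support
      (fun i : ℕ => kund N L (M - i) - kund N L (extWedge M n g i)) ⊆ ↑(Finset.range n) := by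
    intro i hi
    simp only [Finset.coe_range, Set.mem_Iio]
    by_contra h
    push_neg at h
    apply hi
    simp [extWedge, Nat.not_lt.mpr h]
  rw [degF, finsum_eq_finset_sum_of_support_subset _ hsupp, degV,
    ← Fin.sum_univ_eq_sum_range]
  apply Finset.sum_congr rfl
  intro i _
  congr 1
  simp [extWedge, i.isLt]

lemma part1 (N L : ℕ) (hN : 2 ≤ N) (hL : 2 ≤ L) (M : ℤ) (s d : ℕ)
    (hs : (M : ℤ) % (N * L) = s)
    (f : ℕ → ℤ) (hf : StrictAnti f) (hev : ∃ N₀ : ℕ, ∀ i ≥ N₀, f i = M - i)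
    (hdeg : degF N L M f = d) :
    ∀ i : ℕ, s + d * (N * L) ≤ i → f i = M - i := by
  have hN' : 0 < N := by omega
  have hL' : 0 < L := by omega
  have hP := P_pos hN' hL'
  obtain ⟨N₀, hN₀⟩ := hev
  intro i hi
  by_contra hne
  have hgei := ge_vac hf hN₀ i
  have hfi : M - i + 1 ≤ f i := by omega
  have hstep : ∀ j : ℕ, j ≤ i → M - j + 1 ≤ f j := by
    intro j hj
    have hg := gap hf j (i - j)
    have e : j + (i - j) = i := by omega
    rw [e] at hg
    have hc : ((i - j : ℕ) : ℤ) = (i : ℤ) - j := by omega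
    omega
  set F : ℕ → ℤ := fun j => kund N L (M - j) - kund N L (f j) with hF
  have hFnn : ∀ j, 0 ≤ F j := by
    intro j
    have := kund_antitone hN' hL' (ge_vac hf hN₀ j)
    simp only [hF]
    omega
  set B := max (i + 1) N₀ with hB
  have hsum : degF N L M f = ∑ j ∈ Finset.range B, F j := by
    apply finsum_eq_finset_sum_of_support_subset
    intro j hj
    simp only [Finset.coe_range, Set.mem_Iio]
    by_contra h
    push_neg at h
    apply hj
    simp only [hF, hN₀ j (by omega), sub_self]
  have hMeq : M = ((N:ℤ) * L) * (M / ((N:ℤ) * L)) + s := by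
    have := Int.mul_ediv_add_emod M ((N:ℤ) * L); omega
  -- special indices
  set S : Finset ℕ := (Finset.range (d + 1)).image (fun m => s + m * (N * L)) with hS
  have hSsub : S ⊆ Finset.range B := by
    intro j hj
    simp only [hS, Finset.mem_image, Finset.mem_range] at hj
    obtain ⟨m, hm, rfl⟩ := hj
    have : m * (N * L) ≤ d * (N * L) := Nat.mul_le_mul_right _ (by omega)
    simp only [Finset.mem_range, hB]
    omega
  have hone : ∀ j ∈ S, (1 : ℤ) ≤ F j := by
    intro j hj
    simp only [hS, Finset.mem_image, Finset.mem_range] at hj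
    obtain ⟨m, hm, rfl⟩ := hj
    have hle : m * (N * L) ≤ d * (N * L) := Nat.mul_le_mul_right _ (by omega)
    have hji : s + m * (N * L) ≤ i := by omega
    have hmod : (M - (s + m * (N * L) : ℕ)) % ((N:ℤ) * L) = 0 := by
      have he : (M - (s + m * (N * L) : ℕ) : ℤ)
          = ((N:ℤ) * L) * (M / ((N:ℤ) * L) - m) := by
        push_cast
        linear_combination hMeq
      rw [he, Int.mul_emod_right]
    have hjf := hstep _ hji
    have := kund_jump hN' hL' hmod hjf
    simp only [hF]
    omega
  have hcard : S.card = d + 1 := by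
    rw [hS, Finset.card_image_of_injective _ (fun a b hab => by
      have : (0:ℕ) < N * L := by positivity
      exact Nat.eq_of_mul_eq_mul_right this (by omega)), Finset.card_range]
  have h1 : ((d : ℤ) + 1) ≤ ∑ j ∈ S, F j := by
    calc ((d : ℤ) + 1) = ∑ _j ∈ S, (1 : ℤ) := by
          rw [Finset.sum_const, hcard, nsmul_eq_mul, mul_one]; push_cast; ring_nf
    _ ≤ ∑ j ∈ S, F j := Finset.sum_le_sum hone
  have h2 : ∑ j ∈ S, F j ≤ ∑ j ∈ Finset.range B, F j :=
    Finset.sum_le_sum_of_subset_of_nonneg hSsub (fun j _ _ => hFnn j)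
  rw [hdeg] at hsum
  omega

lemma ext_strictAnti (N L : ℕ) (hN' : 0 < N) (hL' : 0 < L) (M : ℤ) (n : ℕ)
    (hmodn : (M - (n:ℤ)) % ((N:ℤ) * L) = 0) (g : Fin n → ℤ)
    (hg1 : ∀ i j : Fin n, i < j → g j < g i)
    (hg2 : ∀ h : 0 < n, kund N L (g ⟨n - 1, by omega⟩) ≤ kund N L (M - ((n - 1 : ℕ) : ℤ))) :
    StrictAnti (extWedge M n g) := by
  have hlast : ∀ h : 0 < n, M - (n:ℤ) + 1 ≤ g ⟨n - 1, by omega⟩ := by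
    intro h
    have h2 := hg2 h
    have he : (M : ℤ) - ((n - 1 : ℕ) : ℤ) = (M - (n:ℤ)) + 1 := by omega
    rw [he] at h2
    exact (kund_le_iff hN' hL' hmodn).mp h2
  apply strictAnti_nat_of_succ_lt
  intro i
  by_cases h1 : i + 1 < n
  · have h0 : i < n := by omega
    simp only [extWedge, dif_pos h1, dif_pos h0]
    exact hg1 ⟨i, h0⟩ ⟨i + 1, h1⟩ (by simp)
  · by_cases h2 : i < n
    · have h0 : 0 < n := by omega
      have hl2 := hlast h0
      simp only [extWedge, dif_neg h1, dif_pos h2]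
      have hin : i = n - 1 := by omega
      subst hin
      refine lt_of_lt_of_le ?_ hl2
      omega
    · simp only [extWedge, dif_neg h1, dif_neg (by omega : ¬ i < n)]
      push_cast; omega

/-- for `0 ≤ d ≤ l`, every normally ordered semi-infinite wedge of
charge `M` and degree `d` satisfies `k_i = M − i + 1` for all (1-based) `i > s + dNL`
(where `M ≡ s mod NL`, `0 ≤ s < NL`); consequently
`ρ_l^d : V_{s+lNL}^d → F_M^d`, `w ↦ w ∧ |M − s − lNL⟩`, is a bijection between the
normally ordered wedge bases, hence an isomorphism of vector spaces. -/
theorem statement_16 (N L : ℕ) (hN : 2 ≤ N) (hL : 2 ≤ L)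
    (M : ℤ) (s d l : ℕ) (hs : (M : ℤ) % (N * L) = s) (hdl : d ≤ l) :
    (∀ f : ℕ → ℤ, StrictAnti f → (∃ N₀ : ℕ, ∀ i ≥ N₀, f i = M - i) →
      degF N L M f = d →
      ∀ i : ℕ, s + d * (N * L) ≤ i → f i = M - i) ∧
    Set.BijOn (extWedge M (s + l * (N * L)))
      {g : Fin (s + l * (N * L)) → ℤ |
        (∀ i j : Fin (s + l * (N * L)), i < j → g j < g i) ∧
        (∀ h : 0 < s + l * (N * L),
          kund N L (g ⟨s + l * (N * L) - 1, by omega⟩)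
            ≤ kund N L (M - (s + l * (N * L) - 1 : ℕ))) ∧
        degV N L M (s + l * (N * L)) g = d}
      {f : ℕ → ℤ | StrictAnti f ∧ (∃ N₀ : ℕ, ∀ i ≥ N₀, f i = M - i) ∧
        degF N L M f = d} := by
  have hN' : 0 < N := by omega
  have hL' : 0 < L := by omega
  have hP := P_pos hN' hL'
  have hp1 := part1 N L hN hL M s d hs
  refine ⟨fun f hf hev hdeg => hp1 f hf hev hdeg, ?_, ?_, ?_⟩
  · -- MapsTo
    rintro g ⟨hg1, hg2, hg3⟩
    have hMeq : M = ((N:ℤ) * L) * (M / ((N:ℤ) * L)) + s := by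
      have := Int.mul_ediv_add_emod M ((N:ℤ) * L); omega
    have hmodn : (M - ((s + l * (N * L) : ℕ) : ℤ)) % ((N:ℤ) * L) = 0 := by
      have he : (M - ((s + l * (N * L) : ℕ) : ℤ))
          = ((N:ℤ) * L) * (M / ((N:ℤ) * L) - l) := by
        push_cast; linear_combination hMeq
      rw [he, Int.mul_emod_right]
    have hfa : StrictAnti (extWedge M (s + l * (N * L)) g) :=
      ext_strictAnti N L hN' hL' M _ hmodn g hg1 hg2
    refine ⟨hfa, ⟨s + l * (N * L), fun i hi => by
      simp [extWedge, Nat.not_lt.mpr hi]⟩, ?_⟩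
    rw [degF_extWedge]
    exact hg3
  · -- InjOn
    intro g₁ _ g₂ _ heq
    funext i
    have h := congrFun heq i.1
    simpa [extWedge, i.isLt] using h
  · -- SurjOn
    intro f hf
    obtain ⟨hsa, ⟨N₀, hN₀⟩, hdeg⟩ := hf
    set n := s + l * (N * L) with hn
    have hvac : ∀ i : ℕ, n ≤ i → f i = M - i := by
      intro i hi
      apply hp1 f hsa ⟨N₀, hN₀⟩ hdeg
      have : d * (N * L) ≤ l * (N * L) := Nat.mul_le_mul_right _ hdl
      omega
    refine ⟨fun i : Fin n => f i.1, ⟨?_, ?_, ?_⟩, ?_⟩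
    · intro i j hij
      exact hsa (show (i : ℕ) < (j : ℕ) from hij)
    · intro h
      exact kund_antitone hN' hL' (ge_vac hsa hN₀ (n - 1))
    · rw [← degF_extWedge N L M n (fun i : Fin n => f i.1)]
      have hext : extWedge M n (fun i : Fin n => f i.1) = f := by
        funext i
        by_cases h : i < n
        · simp [extWedge, h]
        · simp only [extWedge, dif_neg h]
          exact (hvac i (by omega)).symm
      rw [hext]
      exact hdeg
    · funext i
      by_cases h : i < n
      · simp [extWedge, show i < s + l * (N * L) from h]
      · simp only [extWedge, dif_neg (show ¬ i < s + l * (N * L) from h)]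
        exact (hvac i (by omega)).symm

end WedgeDeg

end
end

section
/- For any skew Young diagram D(h⃗) of type D_L(N), the rational function Ω_{h⃗}(u) = Π_{k≥1} (u + 2 − r_1 − k − Σ_{i=1}^{k−1}h_i)/(u + 1 − k − Σ_{i=1}^{k−1}h_i^vac) (with r_1 = 1 + Σ_{i≥1}(h_i^vac − h_i)) uniquely determines D(h⃗): if Ω_{h⃗}(u) = Ω_{h⃗'}(u) as rational functions then h⃗ = h⃗'. -/
noncomputable section

/-!
The rational function `Ω_h(u)` attached to a semi-infinite skew diagram of type
`D_L(N)` determines the diagram.  A diagram is given by the sequence of offsets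
`h = (h_1, h_2, …)` (here 0-indexed: `h i = h_{i+1}`), each row having `L`
squares; the vacuum sequence is `h^vac_i = L` if `N ∣ i`, else `0`.  `h` is of
type `D_L(N)` iff `h_i = h^vac_i` for all but finitely many `i` and every column
of the diagram has at most `N` squares (equivalently, every `N` consecutive
offsets sum to at least `L`).  With `r_1 = 1 + Σ_i (h^vac_i − h_i)`,
`Ω_h(u) = Π_{k≥1} (u + 2 − r_1 − k − Σ_{i<k} h_i)/(u + 1 − k − Σ_{i<k} h^vac_i)`,
a finite product of linear fractions in the field `RatFunc ℂ`.
-/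

namespace OmegaDiag

/-- The vacuum offset sequence (0-indexed): `h^vac_{i+1} = L` if `N ∣ i+1`, else 0. -/
def hvac (N L : ℕ) (i : ℕ) : ℕ := if (i + 1) % N = 0 then L else 0

/-- `h` is (the offset sequence of) a semi-infinite skew diagram of type `D_L(N)`. -/
def TypeDLN (N L : ℕ) (h : ℕ → ℕ) : Prop :=
  (∃ K : ℕ, ∀ i ≥ K, h i = hvac N L i) ∧
  (∀ k : ℕ, L ≤ ∑ i ∈ Finset.Ico k (k + N), h i)

/-- `r_1 = 1 + Σ_{i≥1} (h^vac_i − h_i)`. -/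
def r1 (N L : ℕ) (h : ℕ → ℕ) : ℤ :=
  1 + ∑ᶠ i : ℕ, ((hvac N L i : ℤ) - (h i : ℤ))

/-- The rational function `Ω_h(u)`, as an element of `RatFunc ℂ` (the `k`-th factor,
`k = j + 1 ≥ 1`, is `(u + 2 − r_1 − k − Σ_{i<k} h_i)/(u + 1 − k − Σ_{i<k} h^vac_i)`;
all but finitely many factors equal 1). -/
def Omega (N L : ℕ) (h : ℕ → ℕ) : RatFunc ℂ :=
  ∏ᶠ j : ℕ,
    (RatFunc.X - RatFunc.C ((r1 N L h + (j : ℤ) + 1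
        + ∑ i ∈ Finset.range j, (h i : ℤ) - 2 : ℤ) : ℂ))
    / (RatFunc.X - RatFunc.C (((j : ℤ) + 1
        + ∑ i ∈ Finset.range j, (hvac N L i : ℤ) - 1 : ℤ) : ℂ))

/-- Numerator roots. -/
def A (N L : ℕ) (h : ℕ → ℕ) (j : ℕ) : ℤ :=
  r1 N L h + (j : ℤ) + 1 + ∑ i ∈ Finset.range j, (h i : ℤ) - 2

/-- Denominator roots. -/
def B (N L : ℕ) (j : ℕ) : ℤ :=
  (j : ℤ) + 1 + ∑ i ∈ Finset.range j, (hvac N L i : ℤ) - 1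

lemma A_strictMono (N L : ℕ) (h : ℕ → ℕ) : StrictMono (A N L h) := by
  apply strictMono_nat_of_lt_succ
  intro n
  simp only [A, Finset.sum_range_succ]
  push_cast
  have : (0:ℤ) ≤ h n := Int.natCast_nonneg _
  linarith

lemma r1_eq (N L : ℕ) (h : ℕ → ℕ) {K : ℕ} (hK : ∀ i ≥ K, h i = hvac N L i)
    {j : ℕ} (hj : K ≤ j) :
    r1 N L h = 1 + ∑ i ∈ Finset.range j, ((hvac N L i : ℤ) - (h i : ℤ)) := by
  unfold r1
  congr 1
  apply finsum_eq_finset_sum_of_support_subset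
  intro i hi
  simp only [Function.mem_support] at hi
  simp only [Finset.coe_range, Set.mem_Iio]
  by_contra hij
  push_neg at hij
  exact hi (by rw [hK i (le_trans hj hij)]; ring)

lemma A_eq_B (N L : ℕ) (h : ℕ → ℕ) {K : ℕ} (hK : ∀ i ≥ K, h i = hvac N L i)
    {j : ℕ} (hj : K ≤ j) : A N L h j = B N L j := by
  unfold A B
  rw [r1_eq N L h hK hj, Finset.sum_sub_distrib]
  ring

open Polynomial in
lemma eq_of_prodXsubC_eq {M : ℕ} {f g : ℕ → ℤ} (hf : StrictMono f) (hg : StrictMono g)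
    (hfg : ∏ j ∈ Finset.range M, (X - C ((f j : ℤ) : ℂ))
         = ∏ j ∈ Finset.range M, (X - C ((g j : ℤ) : ℂ))) :
    ∀ j < M, f j = g j := by
  have roots : ∀ F : ℕ → ℤ,
      (∏ j ∈ Finset.range M, (X - C ((F j : ℤ) : ℂ))).roots
        = Multiset.map (fun j => ((F j : ℤ) : ℂ)) (Finset.range M).val := by
    intro F
    rw [← Polynomial.roots_multiset_prod_X_sub_C
      (Multiset.map (fun j => ((F j : ℤ) : ℂ)) (Finset.range M).val)]
    rw [Multiset.map_map, Finset.prod_eq_multiset_prod]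
    rfl
  have hmul : Multiset.map (fun j => ((f j : ℤ) : ℂ)) (Finset.range M).val
      = Multiset.map (fun j => ((g j : ℤ) : ℂ)) (Finset.range M).val := by
    rw [← roots f, ← roots g, hfg]
  have hmulZ : Multiset.map f (Finset.range M).val
      = Multiset.map g (Finset.range M).val := by
    apply Multiset.map_injective (f := (Int.cast : ℤ → ℂ)) Int.cast_injective
    rw [Multiset.map_map, Multiset.map_map]
    exact hmul
  have hlist : List.map f (List.range M) = List.map g (List.range M) := by
    have hperm : (List.map f (List.range M)).Perm (List.map g (List.range M)) := by
      rw [← Multiset.coe_eq_coe]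
      simpa [Finset.range_val, Multiset.range] using hmulZ
    have hs : ∀ F : ℕ → ℤ, StrictMono F →
        List.Pairwise (· < ·) (List.map F (List.range M)) := by
      intro F hF
      exact List.Pairwise.map _ (fun a b hab => hF hab) (List.pairwise_lt_range (n := M))
    have : IsAntisymm ℤ (· < ·) := ⟨fun a b h1 h2 => absurd h2 (lt_asymm h1)⟩
    exact List.Perm.eq_of_pairwise (fun a b _ _ h1 h2 => absurd h2 (lt_asymm h1)) (hs f hf) (hs g hg) hperm
  intro j hj
  rw [List.map_eq_map_iff] at hlist
  exact hlist j (List.mem_range.2 hj)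

lemma X_sub_C_ne_zero' (c : ℂ) : RatFunc.X - RatFunc.C c ≠ 0 := by
  rw [← RatFunc.algebraMap_X, ← RatFunc.algebraMap_C, ← map_sub]
  exact RatFunc.algebraMap_ne_zero (Polynomial.X_sub_C_ne_zero c)

lemma Omega_eq_prod (N L : ℕ) (h : ℕ → ℕ) {K : ℕ} (hK : ∀ i ≥ K, h i = hvac N L i)
    {M : ℕ} (hM : K ≤ M) :
    Omega N L h = ∏ j ∈ Finset.range M,
      (RatFunc.X - RatFunc.C ((A N L h j : ℤ) : ℂ))
        / (RatFunc.X - RatFunc.C ((B N L j : ℤ) : ℂ)) := by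
  apply finprod_eq_prod_of_mulSupport_subset
  intro j hj
  simp only [Finset.coe_range, Set.mem_Iio]
  by_contra hjM
  push_neg at hjM
  apply hj
  show (RatFunc.X - RatFunc.C ((A N L h j : ℤ) : ℂ))
        / (RatFunc.X - RatFunc.C ((B N L j : ℤ) : ℂ)) = 1
  rw [A_eq_B N L h hK (le_trans hM hjM)]
  exact div_self (X_sub_C_ne_zero' _)

/-- for diagrams of type `D_L(N)`, the rational function `Ω_h`
uniquely determines the diagram: `Ω_h = Ω_h'` implies `h = h'`. -/
theorem statement_17 (N L : ℕ) (hN : 2 ≤ N) (hL : 2 ≤ L)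
    (h h' : ℕ → ℕ) (Hh : TypeDLN N L h) (Hh' : TypeDLN N L h')
    (heq : Omega N L h = Omega N L h') : h = h' := by
  obtain ⟨K, hK⟩ := Hh.1
  obtain ⟨K', hK'⟩ := Hh'.1
  set M := max K K' with hMdef
  have hKM : K ≤ M := le_max_left _ _
  have hK'M : K' ≤ M := le_max_right _ _
  rw [Omega_eq_prod N L h hK hKM, Omega_eq_prod N L h' hK' hK'M,
    Finset.prod_div_distrib, Finset.prod_div_distrib] at heq
  have hD : (∏ j ∈ Finset.range M, (RatFunc.X - RatFunc.C ((B N L j : ℤ) : ℂ))) ≠ 0 :=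
    Finset.prod_ne_zero_iff.2 fun j _ => X_sub_C_ne_zero' _
  have hnum : (∏ j ∈ Finset.range M, (RatFunc.X - RatFunc.C ((A N L h j : ℤ) : ℂ)))
      = ∏ j ∈ Finset.range M, (RatFunc.X - RatFunc.C ((A N L h' j : ℤ) : ℂ)) :=
    (div_left_inj' hD).mp heq
  -- transfer to polynomials
  have poly : ∀ hh : ℕ → ℕ,
      (∏ j ∈ Finset.range M, (RatFunc.X - RatFunc.C ((A N L hh j : ℤ) : ℂ)))
        = algebraMap (Polynomial ℂ) (RatFunc ℂ)
            (∏ j ∈ Finset.range M, (Polynomial.X - Polynomial.C ((A N L hh j : ℤ) : ℂ))) := by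
    intro hh
    rw [map_prod]
    refine Finset.prod_congr rfl fun j _ => ?_
    rw [map_sub, RatFunc.algebraMap_X, RatFunc.algebraMap_C]
  rw [poly h, poly h'] at hnum
  have hpoly := RatFunc.algebraMap_injective ℂ hnum
  have hA : ∀ j, A N L h j = A N L h' j := by
    intro j
    by_cases hj : j < M
    · exact eq_of_prodXsubC_eq (A_strictMono N L h) (A_strictMono N L h') hpoly j hj
    · push_neg at hj
      rw [A_eq_B N L h hK (le_trans hKM hj), A_eq_B N L h' hK' (le_trans hK'M hj)]
  funext j
  have h1 := hA j
  have h2 := hA (j + 1)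
  simp only [A, Finset.sum_range_succ] at h1 h2
  have : (h j : ℤ) = (h' j : ℤ) := by push_cast at h1 h2 ⊢; linarith
  exact_mod_cast this

end OmegaDiag

end
end
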